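/- arXiv:2603.07589 — 9 statements merged into one kernel-verified Lean document; each statement's English description precedes it below -/
import Mathlib

section
/- Let f be a polynomial in F[x_0, x_1, ..., x_n] that is reverse-monic with respect to x_0 (i.e., its coefficient of x_0^0 as a polynomial in x_0 equals 1). Then the number of irreducible factors of f, counted with multiplicity, is at most the degree of f in x_0. -/
/-- If `f ∈ F[x₀,...,xₙ]` is reverse-monic with respect to `x₀` (its coefficient of `x₀^0`,
as a polynomial in `x₀`, is `1`), then the number of irreducible factors of `f`,
counted with multiplicity, is at most the degree of `f` in `x₀`. -/
theorem stmt0 {F : Type*} [Field F] {n : ℕ} (f : MvPolynomial (Fin (n + 1)) F)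
    (hrm : ((MvPolynomial.finSuccEquiv F n) f).coeff 0 = 1)
    (s : Multiset (MvPolynomial (Fin (n + 1)) F))
    (hirr : ∀ p ∈ s, Irreducible p)
    (hprod : Associated s.prod f) :
    Multiset.card s ≤ MvPolynomial.degreeOf 0 f := by
  set e := MvPolynomial.finSuccEquiv F n with he
  obtain ⟨u, hu⟩ := hprod
  -- coeff 0 of the image of each factor is a unit
  have hcoeff : ∀ p ∈ s, IsUnit ((e p).coeff 0) := by
    intro p hp
    obtain ⟨t, ht⟩ := Multiset.exists_cons_of_mem hp
    have h1 : (e p).coeff 0 * ((e t.prod).coeff 0 * (e ↑u).coeff 0) = 1 := by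
      rw [← hrm, ← hu, ht]
      simp only [Multiset.prod_cons, map_mul, Polynomial.mul_coeff_zero]
      ring
    exact IsUnit.of_mul_eq_one _ h1
  -- each factor has natDegree (e p) ≥ 1
  have hdeg : ∀ p ∈ s, 1 ≤ (e p).natDegree := by
    intro p hp
    by_contra h
    have h0 : (e p).natDegree = 0 := by omega
    have hC : e p = Polynomial.C ((e p).coeff 0) := Polynomial.eq_C_of_natDegree_eq_zero h0
    have hup : IsUnit (e p) := hC ▸ (hcoeff p hp).map Polynomial.C
    exact (hirr p hp).not_isUnit (by simpa using hup.map e.symm)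
  have hne : (0 : Polynomial (MvPolynomial (Fin n) F)) ∉ s.map (fun p => e p) := by
    intro h
    obtain ⟨p, hp, hep⟩ := Multiset.mem_map.mp h
    have : p = 0 := by
      have := congrArg e.symm hep; simpa using this
    exact (hirr p hp).ne_zero this
  have hprodnd : ((s.map fun p => e p).prod).natDegree
      = ((s.map fun p => e p).map Polynomial.natDegree).sum :=
    Polynomial.natDegree_multiset_prod _ hne
  have hsum : Multiset.card s ≤ ((s.map fun p => e p).prod).natDegree := by
    rw [hprodnd, Multiset.map_map]
    have := Multiset.card_nsmul_le_sum (s := s.map fun p => (e p).natDegree) (a := 1)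
      (by intro x hx; obtain ⟨p, hp, rfl⟩ := Multiset.mem_map.mp hx; exact hdeg p hp)
    simpa using this
  -- relate to degreeOf 0 f
  have hfe : e f = (s.map fun p => e p).prod * e ↑u := by
    rw [← hu, map_mul]
    congr 1
    simpa using (Multiset.prod_hom s e.toAlgHom.toRingHom).symm
  have hu0 : (e ↑u) ≠ 0 := by
    intro h
    have h2 := congrArg e.symm h
    simp at h2
  have hp0 : ((s.map fun p => e p).prod) ≠ 0 := Multiset.prod_ne_zero hne
  have : (e f).natDegree = ((s.map fun p => e p).prod).natDegree + (e ↑u).natDegree := by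
    rw [hfe, Polynomial.natDegree_mul hp0 hu0]
  rw [← MvPolynomial.natDegree_finSuccEquiv, ← he, this]
  omega
end

section
/- Let f, g ∈ F[x] be univariate polynomials of positive degree over a field F. Then the dimension of the kernel of the Sylvester matrix of f and g (equivalently, the corank of the Sylvester map (h_1,h_2) ↦ h_1 g + h_2 f from F[x]_{<deg g} × F[x]_{<deg f} to F[x]_{<deg f + deg g}) equals the degree of gcd(f,g). -/
open Polynomial

/-- The Sylvester matrix of two univariate polynomials `f` and `g`:
a square matrix of size `deg f + deg g`.  The first `deg g` rows are the
coefficient vectors of `x^(deg g - 1 - i) * f` and the remaining `deg f` rows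
are the coefficient vectors of `x^(deg f - 1 - i) * g`, with column `j`
corresponding to the monomial `x^(deg f + deg g - 1 - j)`. -/
noncomputable def sylvester {R : Type*} [CommRing R] (f g : R[X]) :
    Matrix (Fin (f.natDegree + g.natDegree)) (Fin (f.natDegree + g.natDegree)) R :=
  Matrix.of fun i j =>
    if (i : ℕ) < g.natDegree then
      (if (j : ℕ) ≤ f.natDegree + (i : ℕ) then f.coeff (f.natDegree + (i : ℕ) - (j : ℕ)) else 0)
    else
      (if (j : ℕ) ≤ g.natDegree + ((i : ℕ) - g.natDegree) then
        g.coeff (g.natDegree + ((i : ℕ) - g.natDegree) - (j : ℕ)) else 0)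

/-- The resultant of two univariate polynomials: the determinant of their Sylvester matrix. -/
noncomputable def resultant {R : Type*} [CommRing R] (f g : R[X]) : R :=
  (_root_.sylvester f g).det

private lemma aux_eq_zero {F : Type*} [Field F] (p : Polynomial F) (B : ℕ)
    (h1 : p.natDegree < B) (h2 : ∀ k < B, p.coeff k = 0) : p = 0 := by
  ext k
  simp only [coeff_zero]
  by_cases hk : k < B
  · exact h2 k hk
  · exact coeff_eq_zero_of_natDegree_lt (lt_of_lt_of_le h1 (le_of_not_gt hk))

private lemma aux_coeff {F : Type*} [Field F] (w : ℕ → F) (B s : ℕ) (hs : s < B) :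
    (∑ i ∈ Finset.range B, C (w i) * X ^ i).coeff s = w s := by
  simp only [finset_sum_coeff, coeff_C_mul, coeff_X_pow, mul_ite, mul_one, mul_zero]
  rw [Finset.sum_ite_eq (Finset.range B) s w, if_pos (Finset.mem_range.2 hs)]

private lemma aux_rev {F : Type*} [Field F] (w : ℕ → F) (B : ℕ) :
    ∑ i ∈ Finset.range B, C (w i) * X ^ (B - 1 - i) =
      ∑ i ∈ Finset.range B, C (w (B - 1 - i)) * X ^ i := by
  rw [← Finset.sum_range_reflect (fun t => C (w (B - 1 - t)) * X ^ t) B]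
  refine Finset.sum_congr rfl fun i hi => ?_
  rw [Finset.mem_range] at hi
  congr 3
  omega

private lemma aux_recon2 {F : Type*} [Field F] (p : Polynomial F) (B : ℕ)
    (h : p.natDegree < B) :
    ∑ i ∈ Finset.range B, C (p.coeff i) * X ^ i = p := by
  conv_rhs => rw [p.as_sum_range' B h]
  exact Finset.sum_congr rfl fun i _ => C_mul_X_pow_eq_monomial

private lemma aux_recon {F : Type*} [Field F] (p : Polynomial F) (B : ℕ)
    (h : p.natDegree < B) :
    ∑ i ∈ Finset.range B, C (p.coeff (B - 1 - i)) * X ^ (B - 1 - i) = p := by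
  rw [aux_rev (fun t => p.coeff (B - 1 - t)) B]
  rw [show (∑ i ∈ Finset.range B, C (p.coeff (B - 1 - (B - 1 - i))) * X ^ i)
      = ∑ i ∈ Finset.range B, C (p.coeff i) * X ^ i from
    Finset.sum_congr rfl fun i hi => by
      rw [Finset.mem_range] at hi
      have e : B - 1 - (B - 1 - i) = i := by omega
      rw [e]]
  exact aux_recon2 p B h

open scoped Classical in
/-- The dimension of the kernel of the Sylvester matrix of `f` and `g`
(the corank of the Sylvester map `(h₁, h₂) ↦ h₁ g + h₂ f`) equals `deg gcd(f, g)`. -/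
theorem stmt5 {F : Type*} [Field F] (f g : Polynomial F)
    (hf : 0 < f.natDegree) (hg : 0 < g.natDegree) :
    Module.finrank F (LinearMap.ker (Matrix.mulVecLin (sylvester f g))) =
      (EuclideanDomain.gcd f g).natDegree := by
  classical
  have hf0 : f ≠ 0 := fun h => by simp [h] at hf
  have hg0 : g ≠ 0 := fun h => by simp [h] at hg
  set m := f.natDegree with hm
  set n := g.natDegree with hn
  set d := EuclideanDomain.gcd f g with hdd
  set D := d.natDegree with hDdef
  have hd0 : d ≠ 0 := fun h => hf0 ((EuclideanDomain.gcd_eq_zero_iff).1 h).1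
  obtain ⟨f', hf'⟩ : d ∣ f := EuclideanDomain.gcd_dvd_left f g
  obtain ⟨g', hg'⟩ : d ∣ g := EuclideanDomain.gcd_dvd_right f g
  have hf'0 : f' ≠ 0 := by rintro rfl; rw [mul_zero] at hf'; exact hf0 hf'
  have hg'0 : g' ≠ 0 := by rintro rfl; rw [mul_zero] at hg'; exact hg0 hg'
  have hndf' : D + f'.natDegree = m := by rw [hm, hf', natDegree_mul hd0 hf'0]
  have hndg' : D + g'.natDegree = n := by rw [hn, hg', natDegree_mul hd0 hg'0]
  -- coprimality of g' and f'
  have hbez := EuclideanDomain.gcd_eq_gcd_ab f g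
  rw [← hdd] at hbez
  have hcop : IsCoprime g' f' := by
    refine ⟨EuclideanDomain.gcdB f g, EuclideanDomain.gcdA f g, ?_⟩
    apply mul_left_cancel₀ hd0
    rw [mul_one]
    linear_combination (-1 : F[X]) * hbez - EuclideanDomain.gcdA f g * hf'
      - EuclideanDomain.gcdB f g * hg'
  -- the truncation helpers
  set wv : (Fin (m + n) → F) → ℕ → F :=
    fun v k => if h : k < m + n then v ⟨k, h⟩ else 0 with hwv
  set p1 : (Fin (m + n) → F) → F[X] :=
    fun v => ∑ i ∈ Finset.range n, C (wv v i) * X ^ (n - 1 - i) with hp1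
  set p2 : (Fin (m + n) → F) → F[X] :=
    fun v => ∑ i ∈ Finset.range m, C (wv v (n + i)) * X ^ (m - 1 - i) with hp2
  have hp1nd : ∀ v, (p1 v).natDegree ≤ n - 1 := by
    intro v
    refine natDegree_sum_le_of_forall_le _ _ fun i hi => ?_
    exact (natDegree_C_mul_X_pow_le _ _).trans (by omega)
  have hp2nd : ∀ v, (p2 v).natDegree ≤ m - 1 := by
    intro v
    refine natDegree_sum_le_of_forall_le _ _ fun i hi => ?_
    exact (natDegree_C_mul_X_pow_le _ _).trans (by omega)
  have hsplit : ∀ G : ℕ → F, ∑ i ∈ Finset.range (m + n), G i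
      = (∑ i ∈ Finset.range n, G i) + ∑ i ∈ Finset.range m, G (n + i) := by
    intro G
    rw [add_comm m n]
    exact Finset.sum_range_add G n m
  -- Lemma A : the transposed Sylvester matrix computes coefficients of p1 v * f + p2 v * g
  have hA : ∀ (v : Fin (m + n) → F) (j : Fin (m + n)),
      ((_root_.sylvester f g).transpose.mulVec v) j = (p1 v * f + p2 v * g).coeff (m + n - 1 - (j : ℕ)) := by
    intro v j
    have hj : (j : ℕ) < m + n := j.isLt
    have hL : ((_root_.sylvester f g).transpose.mulVec v) j
        = ∑ i ∈ Finset.range (m + n),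
            (if i < n then (if (j : ℕ) ≤ m + i then f.coeff (m + i - (j : ℕ)) else 0)
              else (if (j : ℕ) ≤ n + (i - n) then g.coeff (n + (i - n) - (j : ℕ)) else 0))
              * wv v i := by
      rw [Matrix.mulVec, dotProduct]
      rw [← Fin.sum_univ_eq_sum_range]
      refine Finset.sum_congr rfl fun i _ => ?_
      simp only [Matrix.transpose_apply, _root_.sylvester, Matrix.of_apply, hwv]
      rw [dif_pos i.isLt]
    rw [hL, hsplit, coeff_add]
    congr 1
    · -- f part
      rw [hp1]
      simp only
      rw [Finset.sum_mul, finset_sum_coeff]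
      refine Finset.sum_congr rfl fun i hi => ?_
      rw [Finset.mem_range] at hi
      rw [show C (wv v i) * X ^ (n - 1 - i) * f = C (wv v i) * f * X ^ (n - 1 - i) from by ring,
        coeff_mul_X_pow', if_pos hi]
      by_cases hji : (j : ℕ) ≤ m + i
      · rw [if_pos hji, if_pos (show n - 1 - i ≤ m + n - 1 - (j : ℕ) by omega), coeff_C_mul,
          mul_comm]
        congr 2
        omega
      · rw [if_neg hji, if_neg (show ¬ (n - 1 - i ≤ m + n - 1 - (j : ℕ)) by omega), zero_mul]
    · -- g part
      rw [hp2]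
      simp only
      rw [Finset.sum_mul, finset_sum_coeff]
      refine Finset.sum_congr rfl fun i hi => ?_
      rw [Finset.mem_range] at hi
      rw [show C (wv v (n + i)) * X ^ (m - 1 - i) * g = C (wv v (n + i)) * g * X ^ (m - 1 - i)
        from by ring, coeff_mul_X_pow', if_neg (show ¬ (n + i < n) by omega)]
      have e1 : n + i - n = i := by omega
      rw [e1]
      by_cases hji : (j : ℕ) ≤ n + i
      · rw [if_pos hji, if_pos (show m - 1 - i ≤ m + n - 1 - (j : ℕ) by omega), coeff_C_mul,
          mul_comm]
        congr 2
        omega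
      · rw [if_neg hji, if_neg (show ¬ (m - 1 - i ≤ m + n - 1 - (j : ℕ)) by omega), zero_mul]
  -- degree bound of the combination
  have hBnd : ∀ v, (p1 v * f + p2 v * g).natDegree < m + n := by
    intro v
    have h1 : (p1 v * f).natDegree ≤ (n - 1) + m :=
      natDegree_mul_le.trans (by have := hp1nd v; omega)
    have h2 : (p2 v * g).natDegree ≤ (m - 1) + n :=
      natDegree_mul_le.trans (by have := hp2nd v; omega)
    refine (natDegree_add_le _ _).trans_lt (Nat.max_lt.mpr ⟨by omega, by omega⟩)
  -- Lemma B : kernel membership of the transpose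
  have hB : ∀ v : Fin (m + n) → F,
      (_root_.sylvester f g).transpose.mulVecLin v = 0 ↔ p1 v * f + p2 v * g = 0 := by
    intro v
    constructor
    · intro h
      refine aux_eq_zero _ (m + n) (hBnd v) fun k hk => ?_
      have h1 : ((_root_.sylvester f g).transpose.mulVec v) ⟨m + n - 1 - k, by omega⟩ = 0 := by
        have h0 := congrFun h ⟨m + n - 1 - k, by omega⟩
        simpa only [Matrix.mulVecLin_apply, Pi.zero_apply] using h0
      rw [hA v ⟨m + n - 1 - k, by omega⟩] at h1
      have e : m + n - 1 - ((⟨m + n - 1 - k, by omega⟩ : Fin (m + n)) : ℕ) = k := by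
        simp only [Fin.val_mk]; omega
      rwa [e] at h1
    · intro h
      funext j
      simp only [Matrix.mulVecLin_apply, Pi.zero_apply]
      rw [hA v j, h, coeff_zero]
  -- The polynomial-building linear map Q
  set wu : (Fin D → F) → ℕ → F := fun u k => if h : k < D then u ⟨k, h⟩ else 0 with hwu
  set Q : (Fin D → F) →ₗ[F] F[X] :=
    { toFun := fun u => ∑ k ∈ Finset.range D, C (wu u k) * X ^ k
      map_add' := fun u v => by
        rw [← Finset.sum_add_distrib]
        refine Finset.sum_congr rfl fun k hk => ?_
        rw [Finset.mem_range] at hk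
        simp [hwu, dif_pos hk, add_mul]
      map_smul' := fun c u => by
        simp only [RingHom.id_apply]
        rw [Finset.smul_sum]
        refine Finset.sum_congr rfl fun k hk => ?_
        rw [Finset.mem_range] at hk
        simp [hwu, dif_pos hk, smul_eq_C_mul, mul_assoc] } with hQdef
  have hQapp : ∀ u, Q u = ∑ k ∈ Finset.range D, C (wu u k) * X ^ k := fun u => rfl
  have hQcoeff : ∀ u k, (Q u).coeff k = wu u k := by
    intro u k
    by_cases hk : k < D
    · rw [hQapp]
      have : ∀ t ∈ Finset.range D, C (wu u t) * X ^ t = C ((fun s => wu u s) t) * X ^ t :=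
        fun t _ => rfl
      rw [Finset.sum_congr rfl this, aux_coeff (fun s => wu u s) D k hk]
    · rw [hQapp, finset_sum_coeff]
      rw [hwu]
      simp only [dif_neg hk]
      refine Finset.sum_eq_zero fun t ht => ?_
      rw [Finset.mem_range] at ht
      rw [coeff_C_mul, coeff_X_pow, if_neg (by omega), mul_zero]
  have hQnd : ∀ u, (Q u).natDegree ≤ D - 1 := by
    intro u
    rw [hQapp]
    refine natDegree_sum_le_of_forall_le _ _ fun k hk => ?_
    rw [Finset.mem_range] at hk
    exact (natDegree_C_mul_X_pow_le _ _).trans (by omega)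
  have hDm : D ≤ m := by omega
  have hDn : D ≤ n := by omega
  have hQg'nd : ∀ u, (Q u * g').natDegree < n := by
    intro u
    rcases Nat.eq_zero_or_pos D with hD0 | hD0
    · have : Q u = 0 := by rw [hQapp, hD0]; simp
      rw [this, zero_mul, natDegree_zero]; omega
    · refine natDegree_mul_le.trans_lt ?_
      have := hQnd u; omega
  have hQf'nd : ∀ u, (Q u * f').natDegree < m := by
    intro u
    rcases Nat.eq_zero_or_pos D with hD0 | hD0
    · have : Q u = 0 := by rw [hQapp, hD0]; simp
      rw [this, zero_mul, natDegree_zero]; omega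
    · refine natDegree_mul_le.trans_lt ?_
      have := hQnd u; omega
  -- the map Φ
  set Φ : (Fin D → F) →ₗ[F] (Fin (m + n) → F) :=
    { toFun := fun u i => if (i : ℕ) < n then (Q u * g').coeff (n - 1 - (i : ℕ))
        else -((Q u * f').coeff (m - 1 - ((i : ℕ) - n)))
      map_add' := fun u v => by
        funext i
        by_cases hi : (i : ℕ) < n
        · simp [hi, map_add, add_mul]
        · simp only [hi, if_false, map_add, add_mul, coeff_add, neg_add, Pi.add_apply]
      map_smul' := fun c u => by
        funext i
        by_cases hi : (i : ℕ) < n <;>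
          simp [hi, map_smul, smul_mul_assoc, coeff_smul, smul_eq_mul, mul_neg] } with hΦdef
  have hΦapp : ∀ u i, Φ u i = if (i : ℕ) < n then (Q u * g').coeff (n - 1 - (i : ℕ))
      else -((Q u * f').coeff (m - 1 - ((i : ℕ) - n))) := fun u i => rfl
  -- injectivity
  have hinj : Function.Injective Φ := by
    rw [← LinearMap.ker_eq_bot, LinearMap.ker_eq_bot']
    intro u hu
    funext k
    have hD1 : 0 < D := k.pos
    have hall : ∀ c < n, (Q u * g').coeff c = 0 := by
      intro c hc
      have h1 := congrFun hu ⟨n - 1 - c, by omega⟩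
      rw [hΦapp] at h1
      simp only [Fin.val_mk, Pi.zero_apply] at h1
      rw [if_pos (by omega)] at h1
      rwa [show n - 1 - (n - 1 - c) = c from by omega] at h1
    have hz : Q u * g' = 0 := aux_eq_zero _ n (hQg'nd u) hall
    have hQ0 : Q u = 0 := by
      rcases mul_eq_zero.1 hz with h | h
      · exact h
      · exact absurd h hg'0
    have h2 := hQcoeff u k
    rw [hQ0, coeff_zero] at h2
    rw [hwu] at h2
    simp only [dif_pos k.isLt] at h2
    simpa using h2.symm
  -- range identification
  have hrange : LinearMap.range Φ = LinearMap.ker ((_root_.sylvester f g).transpose.mulVecLin) := by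
    apply le_antisymm
    · rintro _ ⟨u, rfl⟩
      rw [LinearMap.mem_ker, hB]
      have e1 : p1 (Φ u) = Q u * g' := by
        rw [hp1]
        simp only
        rw [show (∑ i ∈ Finset.range n, C (wv (Φ u) i) * X ^ (n - 1 - i))
            = ∑ i ∈ Finset.range n, C ((Q u * g').coeff (n - 1 - i)) * X ^ (n - 1 - i) from
          Finset.sum_congr rfl fun i hi => by
            rw [Finset.mem_range] at hi
            rw [hwv]
            simp only [dif_pos (show i < m + n by omega)]
            rw [hΦapp]
            simp only [Fin.val_mk]
            rw [if_pos hi]]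
        exact aux_recon _ n (hQg'nd u)
      have e2 : p2 (Φ u) = -(Q u * f') := by
        rw [hp2]
        simp only
        rw [show (∑ i ∈ Finset.range m, C (wv (Φ u) (n + i)) * X ^ (m - 1 - i))
            = ∑ i ∈ Finset.range m, -(C ((Q u * f').coeff (m - 1 - i)) * X ^ (m - 1 - i)) from
          Finset.sum_congr rfl fun i hi => by
            rw [Finset.mem_range] at hi
            rw [hwv]
            simp only [dif_pos (show n + i < m + n by omega)]
            rw [hΦapp]
            simp only [Fin.val_mk]
            rw [if_neg (show ¬ (n + i < n) by omega),
              show n + i - n = i from by omega, map_neg, neg_mul]]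
        rw [Finset.sum_neg_distrib]
        rw [aux_recon _ m (hQf'nd u)]
      rw [e1, e2, hf', hg']
      ring
    · intro v hv
      rw [LinearMap.mem_ker, hB] at hv
      have hab2 : p1 v * f' + p2 v * g' = 0 := by
        have h3 : d * (p1 v * f' + p2 v * g') = 0 := by
          rw [hf', hg'] at hv
          linear_combination hv
        rcases mul_eq_zero.1 h3 with h | h
        · exact absurd h hd0
        · exact h
      have hdvd : g' ∣ p1 v := by
        refine hcop.dvd_of_dvd_mul_right ⟨-(p2 v), ?_⟩
        linear_combination hab2
      obtain ⟨q, hq⟩ := hdvd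
      have hand : (p1 v).natDegree ≤ n - 1 := hp1nd v
      have hbnd : (p2 v).natDegree ≤ m - 1 := hp2nd v
      have hq0 : q = 0 ∨ q.natDegree < D := by
        rcases eq_or_ne q 0 with h | h
        · exact Or.inl h
        · right
          have h4 : (p1 v).natDegree = g'.natDegree + q.natDegree := by
            rw [hq, natDegree_mul hg'0 h]
          omega
      have hbq : p2 v = -(q * f') := by
        have h5 : g' * (q * f' + p2 v) = 0 := by
          rw [hq] at hab2
          linear_combination hab2
        rcases mul_eq_zero.1 h5 with h | h
        · exact absurd h hg'0
        · linear_combination h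
      refine ⟨fun k => q.coeff (k : ℕ), ?_⟩
      have hQq : Q (fun k => q.coeff (k : ℕ)) = q := by
        rcases hq0 with h | h
        · rw [h]
          rw [show (fun k : Fin D => (0 : F[X]).coeff (k : ℕ)) = 0 from by
            funext k; simp]
          exact map_zero Q
        · rw [hQapp]
          rw [show (∑ k ∈ Finset.range D, C (wu (fun k : Fin D => q.coeff (k : ℕ)) k) * X ^ k)
              = ∑ k ∈ Finset.range D, C (q.coeff k) * X ^ k from
            Finset.sum_congr rfl fun k hk => by
              rw [Finset.mem_range] at hk
              rw [hwu]
              simp only [dif_pos hk]]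
          exact aux_recon2 q D h
      funext i
      rw [hΦapp, hQq]
      by_cases hi : (i : ℕ) < n
      · rw [if_pos hi, show q * g' = p1 v from by rw [hq]; ring]
        rw [show p1 v = ∑ t ∈ Finset.range n, C (wv v (n - 1 - t)) * X ^ t from by
          rw [hp1]; simp only; exact aux_rev (fun t => wv v t) n]
        rw [aux_coeff _ n _ (by omega)]
        rw [show n - 1 - (n - 1 - (i : ℕ)) = (i : ℕ) from by omega]
        rw [hwv]
        simp only [dif_pos i.isLt]
      · rw [if_neg hi, show q * f' = -(p2 v) from by rw [hbq]; ring]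
        simp only [coeff_neg, neg_neg]
        rw [show p2 v = ∑ t ∈ Finset.range m, C (wv v (n + (m - 1 - t))) * X ^ t from by
          rw [hp2]; simp only; exact aux_rev (fun t => wv v (n + t)) m]
        rw [aux_coeff _ m _ (by omega)]
        rw [show n + (m - 1 - (m - 1 - ((i : ℕ) - n))) = (i : ℕ) from by
          have := i.isLt; omega]
        rw [hwv]
        simp only [dif_pos i.isLt]
  -- finish via rank-nullity and rank of transpose
  have hkerT : Module.finrank F (LinearMap.ker ((_root_.sylvester f g).transpose.mulVecLin)) = D := by
    rw [← hrange, LinearMap.finrank_range_of_inj hinj, Module.finrank_fin_fun]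
  have hrk := Matrix.rank_transpose (_root_.sylvester f g)
  have h1 := LinearMap.finrank_range_add_finrank_ker ((_root_.sylvester f g).mulVecLin)
  have h2 := LinearMap.finrank_range_add_finrank_ker ((_root_.sylvester f g).transpose.mulVecLin)
  have h3 : (_root_.sylvester f g).rank
      = Module.finrank F (LinearMap.range (_root_.sylvester f g).mulVecLin) := rfl
  have h4 : (_root_.sylvester f g).transpose.rank
      = Module.finrank F (LinearMap.range (_root_.sylvester f g).transpose.mulVecLin) := rfl
  rw [Module.finrank_fin_fun] at h1 h2
  omega
end

section
/- Let f divide g in the polynomial ring F[x_1,...,x_n], where g has at most s monomials. Then the number of vertices of the Newton polytope of f is at most the number of vertices of the Newton polytope of g, which in turn is at most s. -/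
set_option maxHeartbeats 1000000

open Set Pointwise

section Aux

variable {E : Type*} [NormedAddCommGroup E] [NormedSpace ℝ E]

/-- Unique decomposition of an extreme point of a Minkowski sum. -/
lemma extremePoint_add_unique {P Q : Set E} {z a a' b b' : E}
    (hz : z ∈ (P + Q).extremePoints ℝ) (ha : a ∈ P) (hb : b ∈ Q) (ha' : a' ∈ P) (hb' : b' ∈ Q)
    (h1 : a + b = z) (h2 : a' + b' = z) : a = a' ∧ b = b' := by
  have h3 : (a + b) + (a' + b') = z + z := by rw [h1, h2]
  have hsum : (a + b') + (a' + b) = z + z := by rw [← h3]; abel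
  have hseg : z ∈ openSegment ℝ (a + b') (a' + b) := by
    refine ⟨1/2, 1/2, by norm_num, by norm_num, by norm_num, ?_⟩
    calc (1/2 : ℝ) • (a + b') + (1/2 : ℝ) • (a' + b)
        = (1/2 : ℝ) • ((a + b') + (a' + b)) := (smul_add _ _ _).symm
      _ = (1/2 : ℝ) • (z + z) := by rw [hsum]
      _ = z := by rw [smul_add]; module
  obtain ⟨e1, e2⟩ := (mem_extremePoints.1 hz).2 _ (add_mem_add ha hb') _ (add_mem_add ha' hb) hseg
  have hb'b : b' = b := by
    have : a + b' = a + b := by rw [e1, ← h1]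
    exact add_left_cancel this
  refine ⟨?_, hb'b.symm⟩
  have : a' + b = a + b := by rw [e2, ← h1]
  exact (add_right_cancel this).symm

/-- A summand of an extreme point of a Minkowski sum is extreme. -/
lemma extreme_summand {P Q : Set E} {z a b : E} (hz : z ∈ (P + Q).extremePoints ℝ)
    (ha : a ∈ P) (hb : b ∈ Q) (hab : a + b = z) : a ∈ P.extremePoints ℝ := by
  refine mem_extremePoints.2 ⟨ha, fun p₁ hp₁ p₂ hp₂ hseg => ?_⟩
  obtain ⟨u, v, hu, hv, huv, heq⟩ := hseg
  have hz' : z ∈ openSegment ℝ (p₁ + b) (p₂ + b) := by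
    refine ⟨u, v, hu, hv, huv, ?_⟩
    have h : u • (p₁ + b) + v • (p₂ + b) = (u • p₁ + v • p₂) + (u + v) • b := by module
    rw [h, huv, one_smul, heq, hab]
  obtain ⟨e1, e2⟩ := (mem_extremePoints.1 hz).2 _ (add_mem_add hp₁ hb) _ (add_mem_add hp₂ hb) hz'
  constructor
  · exact add_right_cancel (e1.trans hab.symm)
  · exact add_right_cancel (e2.trans hab.symm)

/-- An extreme point of the convex hull of a finite set admits an exposing functional. -/
lemma exists_exposing {S : Set E} (hS : S.Finite) {v : E}
    (hv : v ∈ (convexHull ℝ S).extremePoints ℝ) :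
    ∃ ℓ : E →L[ℝ] ℝ, ∀ x ∈ convexHull ℝ S, x ≠ v → ℓ x < ℓ v := by
  have hvS : v ∈ S := extremePoints_convexHull_subset hv
  rcases (S \ {v}).eq_empty_or_nonempty with hS' | hS'
  · refine ⟨0, fun x hx hxv => absurd ?_ hxv⟩
    have hsub : S ⊆ {v} := diff_eq_empty.mp hS'
    have : convexHull ℝ S ⊆ convexHull ℝ {v} := convexHull_mono hsub
    simpa using this hx
  · have hnotin : v ∉ convexHull ℝ (S \ {v}) := by
      intro hmem
      have h1 := ((convex_convexHull ℝ S).mem_extremePoints_iff_mem_diff_convexHull_diff).1 hv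
      have hsub : S \ {v} ⊆ convexHull ℝ S \ {v} :=
        diff_subset_diff_left (subset_convexHull ℝ S)
      exact h1.2 (convexHull_mono hsub hmem)
    obtain ⟨ℓ, u, hlu, hux⟩ := geometric_hahn_banach_closed_point
      ((convex_convexHull ℝ _)) ((hS.subset diff_subset).isClosed_convexHull (𝕜 := ℝ)) hnotin
    refine ⟨ℓ, fun x hx hxv => ?_⟩
    have hSeq : convexHull ℝ S = convexJoin ℝ {v} (convexHull ℝ (S \ {v})) := by
      rw [← convexHull_insert hS', insert_diff_singleton, insert_eq_self.2 hvS]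
    rw [hSeq, convexJoin_singleton_left, mem_iUnion₂] at hx
    obtain ⟨y, hy, hxseg⟩ := hx
    obtain ⟨a, b, ha, hb, hab, heq⟩ := hxseg
    rcases eq_or_lt_of_le hb with hb0 | hbpos
    · exfalso
      apply hxv
      have ha1 : a = 1 := by linarith
      rw [← heq, ha1, ← hb0, one_smul, zero_smul, add_zero]
    · have hly : ℓ y < ℓ v := (hlu y hy).trans hux
      calc ℓ x = a * ℓ v + b * ℓ y := by rw [← heq]; simp [map_add, map_smul]
        _ < a * ℓ v + b * ℓ v := by nlinarith
        _ = ℓ v := by rw [← add_mul, hab, one_mul]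

/-- the counting lemma for Minkowski sums of polytopes -/
lemma ncard_extremePoints_le {S T : Set E} (hS : S.Finite) (hT : T.Finite) (hTne : T.Nonempty) :
    ((convexHull ℝ S).extremePoints ℝ).ncard
      ≤ ((convexHull ℝ S + convexHull ℝ T).extremePoints ℝ).ncard := by
  set A := convexHull ℝ S + convexHull ℝ T with hA
  have hAfin : (A.extremePoints ℝ).Finite := by
    have : A = convexHull ℝ (S + T) := (convexHull_add S T).symm
    rw [this]
    exact (hS.add hT).subset extremePoints_convexHull_subset
  have key : ∀ v ∈ (convexHull ℝ S).extremePoints ℝ,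
      ∃ z ∈ A.extremePoints ℝ, ∃ b ∈ convexHull ℝ T, v + b = z := by
    intro v hv
    obtain ⟨ℓ, hℓ⟩ := exists_exposing hS hv
    obtain ⟨t₀, ht₀⟩ := hTne
    have hAcomp : IsCompact A := (hS.isCompact_convexHull (𝕜 := ℝ)).add (hT.isCompact_convexHull (𝕜 := ℝ))
    have hAne : A.Nonempty := ⟨v + t₀, add_mem_add hv.1 (subset_convexHull ℝ T ht₀)⟩
    obtain ⟨z₀, hz₀A, hz₀max⟩ := hAcomp.exists_isMaxOn hAne ℓ.continuous.continuousOn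
    rw [isMaxOn_iff] at hz₀max
    have hz₀max : ∀ y ∈ A, ℓ y ≤ ℓ z₀ := hz₀max
    set B : Set E := {x ∈ A | ∀ y ∈ A, ℓ y ≤ ℓ x} with hB
    have hExp : IsExposed ℝ A B := fun _ => ⟨ℓ, rfl⟩
    have hBne : B.Nonempty := ⟨z₀, hz₀A, hz₀max⟩
    have hBcomp : IsCompact B := hExp.isCompact hAcomp
    have hBconv : Convex ℝ B := hExp.convex
      ((convex_convexHull ℝ S).add (convex_convexHull ℝ T))
    obtain ⟨z, hzB⟩ := hBcomp.extremePoints_nonempty hBne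
    have hzA : z ∈ A.extremePoints ℝ :=
      hExp.isExtreme.extremePoints_subset_extremePoints hzB
    obtain ⟨a, ha, b, hb, habz'⟩ := hzB.1.1
    have habz : a + b = z := habz'
    have hav : a = v := by
      by_contra hav
      have h1 : ℓ a < ℓ v := hℓ a ha hav
      have h2 : ℓ (v + b) ≤ ℓ z := hzB.1.2 (v + b) (add_mem_add hv.1 hb)
      rw [← habz] at h2
      simp only [map_add] at h2
      linarith
    exact ⟨z, hzA, b, hb, by rw [← hav, habz]⟩
  choose! z hz b hb hvb using key
  apply Set.ncard_le_ncard_of_injOn z (fun v hv => hz v hv) _ hAfin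
  intro v hv v' hv' heq
  have h1 := hvb v hv
  have h2 := hvb v' hv'
  rw [heq] at h1
  exact (extremePoint_add_unique (hz v' hv') hv.1 (hb v hv) hv'.1 (hb v' hv') h1 h2).1

end Aux

section Newton

variable {F : Type*} [Field F] {n : ℕ}

/-- the coercion map -/
noncomputable def expCast (n : ℕ) : (Fin n →₀ ℕ) → (Fin n → ℝ) := fun m i => (m i : ℝ)

lemma expCast_add (p q : Fin n →₀ ℕ) : expCast n (p + q) = expCast n p + expCast n q := by
  funext i; simp [expCast]

lemma expCast_inj {p q : Fin n →₀ ℕ} (h : expCast n p = expCast n q) : p = q := by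
  ext i
  exact Nat.cast_injective (congrFun h i)

end Newton

/-- The Newton polytope of a multivariate polynomial: the convex hull in `ℝⁿ` of the
exponent vectors of its monomials with nonzero coefficient. -/
noncomputable def newtonPolytope {F : Type*} [Field F] {n : ℕ}
    (f : MvPolynomial (Fin n) F) : Set (Fin n → ℝ) :=
  convexHull ℝ ((fun m : Fin n →₀ ℕ => fun i => (m i : ℝ)) '' (f.support : Set (Fin n →₀ ℕ)))

section NewtonMul

variable {F : Type*} [Field F] {n : ℕ}

lemma newton_mul (f h : MvPolynomial (Fin n) F) (hf : f ≠ 0) (hh : h ≠ 0) :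
    newtonPolytope (f * h)
      = convexHull ℝ (expCast n '' (f.support : Set (Fin n →₀ ℕ)))
        + convexHull ℝ (expCast n '' (h.support : Set (Fin n →₀ ℕ))) := by
  classical
  set S := expCast n '' (f.support : Set (Fin n →₀ ℕ)) with hSdef
  set T := expCast n '' (h.support : Set (Fin n →₀ ℕ)) with hTdef
  have hSfin : S.Finite := f.support.finite_toSet.image _
  have hTfin : T.Finite := h.support.finite_toSet.image _
  apply subset_antisymm
  · have h1 : expCast n '' ((f * h).support : Set (Fin n →₀ ℕ)) ⊆ S + T := by
      rintro x ⟨m, hm, rfl⟩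
      have hm' : m ∈ f.support + h.support := MvPolynomial.support_mul f h hm
      rw [Finset.mem_add] at hm'
      obtain ⟨a, ha, b, hb, rfl⟩ := hm'
      rw [expCast_add]
      exact add_mem_add ⟨a, ha, rfl⟩ ⟨b, hb, rfl⟩
    calc newtonPolytope (f * h) ⊆ convexHull ℝ (S + T) := convexHull_mono h1
      _ = convexHull ℝ S + convexHull ℝ T := convexHull_add S T
  · set A := convexHull ℝ S + convexHull ℝ T with hAdef
    have hAcomp : IsCompact A := (hSfin.isCompact_convexHull (𝕜 := ℝ)).add (hTfin.isCompact_convexHull (𝕜 := ℝ))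
    have hAconv : Convex ℝ A := (convex_convexHull ℝ S).add (convex_convexHull ℝ T)
    have hext : A.extremePoints ℝ ⊆ expCast n '' ((f * h).support : Set (Fin n →₀ ℕ)) := by
      intro z hz
      obtain ⟨a, ha, b, hb, habz'⟩ := hz.1
      have habz : a + b = z := habz'
      have haE : a ∈ (convexHull ℝ S).extremePoints ℝ := extreme_summand hz ha hb habz
      have hbE : b ∈ (convexHull ℝ T).extremePoints ℝ := by
        have hz2 : z ∈ (convexHull ℝ T + convexHull ℝ S).extremePoints ℝ := by
          rwa [add_comm (convexHull ℝ T) (convexHull ℝ S)]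
        exact extreme_summand hz2 hb ha (by rw [add_comm, habz])
      obtain ⟨α, hα, hαa⟩ := extremePoints_convexHull_subset haE
      obtain ⟨β, hβ, hβb⟩ := extremePoints_convexHull_subset hbE
      have hz' : expCast n (α + β) = z := by rw [expCast_add, hαa, hβb, habz]
      have hcoeff : MvPolynomial.coeff (α + β) (f * h)
          = MvPolynomial.coeff α f * MvPolynomial.coeff β h := by
        rw [MvPolynomial.coeff_mul]
        apply Finset.sum_eq_single (α, β)
        · intro pq hpq hne
          by_contra hne0
          have hp : MvPolynomial.coeff pq.1 f ≠ 0 := left_ne_zero_of_mul hne0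
          have hq : MvPolynomial.coeff pq.2 h ≠ 0 := right_ne_zero_of_mul hne0
          have hpS : expCast n pq.1 ∈ S := ⟨pq.1, MvPolynomial.mem_support_iff.2 hp, rfl⟩
          have hqT : expCast n pq.2 ∈ T := ⟨pq.2, MvPolynomial.mem_support_iff.2 hq, rfl⟩
          have hsum : expCast n pq.1 + expCast n pq.2 = z := by
            rw [← expCast_add, Finset.HasAntidiagonal.mem_antidiagonal.1 hpq, hz']
          obtain ⟨e1, e2⟩ := extremePoint_add_unique hz
            (subset_convexHull ℝ S hpS) (subset_convexHull ℝ T hqT) ha hb hsum habz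
          have h1 : pq.1 = α := expCast_inj (e1.trans hαa.symm)
          have h2 : pq.2 = β := expCast_inj (e2.trans hβb.symm)
          exact hne (Prod.ext h1 h2)
        · intro hnotmem
          rw [Finset.HasAntidiagonal.mem_antidiagonal] at hnotmem
          simp at hnotmem
      have hmem : α + β ∈ (f * h).support := by
        rw [MvPolynomial.mem_support_iff, hcoeff]
        exact mul_ne_zero (MvPolynomial.mem_support_iff.1 hα) (MvPolynomial.mem_support_iff.1 hβ)
      exact ⟨α + β, hmem, hz'⟩
    calc A = closure (convexHull ℝ (A.extremePoints ℝ)) :=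
          (closure_convexHull_extremePoints hAcomp hAconv).symm
      _ ⊆ closure (convexHull ℝ (expCast n '' ((f * h).support : Set (Fin n →₀ ℕ)))) :=
          closure_mono (convexHull_mono hext)
      _ = newtonPolytope (f * h) :=
          (((f * h).support.finite_toSet.image _).isClosed_convexHull (𝕜 := ℝ)).closure_eq

end NewtonMul

/-- If `f ∣ g` and `g` has at most `s` monomials, then the number of vertices (extreme
points) of the Newton polytope of `f` is at most that of `g`, which is at most `s`. -/
theorem stmt9 {F : Type*} [Field F] {n s : ℕ} (f g : MvPolynomial (Fin n) F)
    (hg : g ≠ 0) (hdvd : f ∣ g) (hs : g.support.card ≤ s) :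
    (Set.extremePoints ℝ (newtonPolytope f)).ncard
        ≤ (Set.extremePoints ℝ (newtonPolytope g)).ncard ∧
    (Set.extremePoints ℝ (newtonPolytope g)).ncard ≤ s := by
  classical
  constructor
  · obtain ⟨h, rfl⟩ := hdvd
    have hf : f ≠ 0 := fun h0 => hg (by rw [h0, zero_mul])
    have hh : h ≠ 0 := fun h0 => hg (by rw [h0, mul_zero])
    have hTne : (expCast n '' (h.support : Set (Fin n →₀ ℕ))).Nonempty := by
      obtain ⟨m, hm⟩ := Finset.nonempty_iff_ne_empty.2
        (fun he => hh (MvPolynomial.support_eq_empty.1 he))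
      exact ⟨expCast n m, m, hm, rfl⟩
    rw [show newtonPolytope (f * h)
        = convexHull ℝ (expCast n '' (f.support : Set (Fin n →₀ ℕ)))
          + convexHull ℝ (expCast n '' (h.support : Set (Fin n →₀ ℕ))) from
      newton_mul f h hf hh]
    exact ncard_extremePoints_le (f.support.finite_toSet.image _)
      (h.support.finite_toSet.image _) hTne
  · have hsub : (newtonPolytope g).extremePoints ℝ
        ⊆ expCast n '' (g.support : Set (Fin n →₀ ℕ)) := extremePoints_convexHull_subset
    calc ((newtonPolytope g).extremePoints ℝ).ncard
        ≤ (expCast n '' (g.support : Set (Fin n →₀ ℕ))).ncard :=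
          Set.ncard_le_ncard hsub (g.support.finite_toSet.image _)
      _ ≤ (g.support : Set (Fin n →₀ ℕ)).ncard := Set.ncard_image_le g.support.finite_toSet
      _ = g.support.card := Set.ncard_coe_finset _
      _ ≤ s := hs
end

section
/- Let f ∈ F[x_1,...,x_n] be a nonzero s-sparse polynomial (at most s monomials) with individual degree at most d in each variable, and suppose f is not divisible by any variable x_i. Then the number of irreducible non-constant factors of f, counted with multiplicity, is at most d·log₂(s). -/
open MvPolynomial Polynomial

section helpers

variable {F : Type*} [Field F]

private lemma assoc_map_hom {R S Ff : Type*} [CommMonoid R] [CommMonoid S] [FunLike Ff R S]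
    [MonoidHomClass Ff R S] (e : Ff) {a b : R}
    (h : Associated a b) : Associated (e a) (e b) := by
  obtain ⟨u, hu⟩ := h
  exact ⟨Units.map (MonoidHomClass.toMonoidHom e) u, by simp [← hu]⟩

private lemma irreducible_of_irreducible_C {R : Type*} [CommRing R] [IsDomain R] {a : R}
    (h : Irreducible (Polynomial.C a)) : Irreducible a := by
  constructor
  · exact fun ha => h.not_isUnit (ha.map Polynomial.C)
  · intro x y hxy
    rcases h.isUnit_or_isUnit (by rw [hxy, map_mul]) with hu | hu
    · exact Or.inl (Polynomial.isUnit_C.mp hu)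
    · exact Or.inr (Polynomial.isUnit_C.mp hu)

private lemma card_le_sum_of (t : Multiset ℕ) (h : ∀ x ∈ t, 1 ≤ x) :
    Multiset.card t ≤ t.sum := by
  induction t using Multiset.induction with
  | empty => simp
  | cons a t ih =>
    simp only [Multiset.card_cons, Multiset.sum_cons]
    have h1 : 1 ≤ a := h a (Multiset.mem_cons_self a t)
    have h2 := ih fun x hx => h x (Multiset.mem_cons_of_mem hx)
    omega

private lemma card_support_coeffs_le {n : ℕ} (f : MvPolynomial (Fin (n+1)) F) {i j : ℕ}
    (hij : i ≠ j) :
    ((finSuccEquiv F n f).coeff i).support.card + ((finSuccEquiv F n f).coeff j).support.card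
      ≤ f.support.card := by
  classical
  have hinj : ∀ k : ℕ, Function.Injective (fun m : Fin n →₀ ℕ => Finsupp.cons k m) := by
    intro k m1 m2 h
    have := congrArg Finsupp.tail h
    simpa [Finsupp.tail_cons] using this
  set S1 := ((finSuccEquiv F n f).coeff i).support.map ⟨_, hinj i⟩ with hS1
  set S2 := ((finSuccEquiv F n f).coeff j).support.map ⟨_, hinj j⟩ with hS2
  have hsub : S1 ∪ S2 ⊆ f.support := by
    intro α hα
    rcases Finset.mem_union.mp hα with h | h
    · simp only [hS1, Finset.mem_map, Function.Embedding.coeFn_mk] at h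
      obtain ⟨m, hm, rfl⟩ := h
      exact mem_support_coeff_finSuccEquiv.mp hm
    · simp only [hS2, Finset.mem_map, Function.Embedding.coeFn_mk] at h
      obtain ⟨m, hm, rfl⟩ := h
      exact mem_support_coeff_finSuccEquiv.mp hm
  have hdisj : Disjoint S1 S2 := by
    rw [Finset.disjoint_left]
    rintro α h1 h2
    simp only [hS1, hS2, Finset.mem_map, Function.Embedding.coeFn_mk] at h1 h2
    obtain ⟨m1, _, rfl⟩ := h1
    obtain ⟨m2, _, heq⟩ := h2
    apply hij
    have := congrArg (fun g : Fin (n+1) →₀ ℕ => g 0) heq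
    simpa [Finsupp.cons_zero] using this.symm
  calc ((finSuccEquiv F n f).coeff i).support.card
        + ((finSuccEquiv F n f).coeff j).support.card
      = S1.card + S2.card := by rw [hS1, hS2, Finset.card_map, Finset.card_map]
    _ = (S1 ∪ S2).card := (Finset.card_union_of_disjoint hdisj).symm
    _ ≤ f.support.card := Finset.card_le_card hsub

end helpers

section main

variable {F : Type*} [Field F]

set_option maxHeartbeats 1000000 in
private lemma good (d : ℕ) : ∀ s n : ℕ, ∀ f : MvPolynomial (Fin n) F, f ≠ 0 →
    f.support.card ≤ s → (∀ i, MvPolynomial.degreeOf i f ≤ d) →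
    ∀ m : Multiset (MvPolynomial (Fin n) F), (∀ p ∈ m, Irreducible p) →
    (∀ p ∈ m, ∀ j, ¬ Associated p (MvPolynomial.X j)) → m.prod ∣ f →
    (Multiset.card m : ℝ) ≤ d * Real.logb 2 s := by
  intro s
  induction s using Nat.strong_induction_on with
  | _ s IH =>
  intro n f hf hs hd m hirr hnass hdvd
  classical
  have hs1 : 1 ≤ s := by
    refine le_trans ?_ hs
    rw [Nat.succ_le_iff, Finset.card_pos, Finset.nonempty_iff_ne_empty]
    exact fun h => hf (support_eq_empty.mp h)
  have hlogs : (0:ℝ) ≤ Real.logb 2 s :=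
    Real.logb_nonneg one_lt_two (by exact_mod_cast hs1)
  rcases Multiset.empty_or_exists_mem m with rfl | ⟨p₀, hp₀⟩
  · simpa using mul_nonneg (Nat.cast_nonneg d) hlogs
  have hp₀i : Irreducible p₀ := hirr _ hp₀
  -- p₀ depends on some variable i
  have hvar : ∃ i, MvPolynomial.degreeOf i p₀ ≠ 0 := by
    by_contra hall
    push_neg at hall
    have hC : p₀ = MvPolynomial.C (MvPolynomial.coeff 0 p₀) := by
      refine MvPolynomial.ext _ _ fun α => ?_
      rw [MvPolynomial.coeff_C]
      by_cases hα : α = 0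
      · subst hα; simp
      · rw [if_neg (fun h => hα h.symm)]
        by_contra hc
        have hmem : α ∈ p₀.support := MvPolynomial.mem_support_iff.mpr hc
        refine hα (Finsupp.ext fun x => ?_)
        have h1 : α x ≤ MvPolynomial.degreeOf x p₀ := by
          rw [degreeOf_eq_sup]
          exact Finset.le_sup (f := fun m0 : Fin n →₀ ℕ => m0 x) hmem
        rw [hall x] at h1
        simpa using h1
    have hc0 : MvPolynomial.coeff 0 p₀ ≠ 0 := fun h => hp₀i.ne_zero (by rw [hC, h, map_zero])
    exact hp₀i.not_isUnit
      (by rw [hC]; exact (IsUnit.mk0 _ hc0).map (MvPolynomial.C : F →+* MvPolynomial (Fin n) F))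
  obtain ⟨i, hi⟩ := hvar
  cases n with
  | zero => exact i.elim0
  | succ n' =>
  -- rename so the variable is 0
  obtain ⟨σ, hσ⟩ : ∃ σ : Equiv.Perm (Fin (n'+1)), σ = Equiv.swap i 0 := ⟨_, rfl⟩
  have hσinj : Function.Injective ⇑σ := σ.injective
  have hσself : ∀ a, σ (σ a) = a := by rw [hσ]; intro a; exact Equiv.swap_apply_self i 0 a
  have hσi : σ i = 0 := by rw [hσ]; exact Equiv.swap_apply_left i 0
  have hσsymm : ∀ a, σ.symm a = σ a := by rw [hσ]; intro a; rw [Equiv.symm_swap]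
  obtain ⟨ρ, hρ⟩ : ∃ ρ : MvPolynomial (Fin (n'+1)) F ≃ₐ[F] MvPolynomial (Fin (n'+1)) F,
      ρ = MvPolynomial.renameEquiv F σ := ⟨_, rfl⟩
  have hρapp : ∀ g : MvPolynomial (Fin (n'+1)) F, ρ g = MvPolynomial.rename ⇑σ g := by
    rw [hρ]; intro g; rfl
  have hρX : ∀ j, ρ.symm (MvPolynomial.X j) = MvPolynomial.X (σ j) := by
    rw [hρ]; intro j
    rw [MvPolynomial.renameEquiv_symm]
    rw [show (MvPolynomial.renameEquiv F σ.symm) (MvPolynomial.X j)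
      = MvPolynomial.rename ⇑σ.symm (MvPolynomial.X j) from rfl, MvPolynomial.rename_X, hσsymm]
  set f' := ρ f with hf'def
  set m' := m.map ⇑ρ with hm'def
  have hf'0 : f' ≠ 0 := by
    rw [hf'def]
    exact fun h => hf (by simpa using congrArg ⇑ρ.symm h)
  have hs' : f'.support.card ≤ s := by
    rw [hf'def, hρapp, support_rename_of_injective hσinj,
      Finset.card_image_of_injective _ (Finsupp.mapDomain_injective hσinj)]
    exact hs
  have hd' : ∀ j, MvPolynomial.degreeOf j f' ≤ d := by
    intro j
    have h1 := MvPolynomial.degreeOf_rename_of_injective (p := f) hσinj (σ j)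
    rw [hσself] at h1
    rw [hf'def, hρapp, h1]
    exact hd _
  have hirr' : ∀ p ∈ m', Irreducible p := by
    intro p hp
    obtain ⟨q, hq, rfl⟩ := Multiset.mem_map.mp hp
    exact (hirr q hq).map ρ
  have hnass' : ∀ p ∈ m', ∀ j, ¬ Associated p (MvPolynomial.X j) := by
    intro p hp j hassoc
    obtain ⟨q, hq, rfl⟩ := Multiset.mem_map.mp hp
    have h2 := assoc_map_hom ρ.symm hassoc
    rw [AlgEquiv.symm_apply_apply, hρX] at h2
    exact hnass q hq (σ j) h2
  have hdvd' : m'.prod ∣ f' := by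
    rw [hm'def, hf'def, ← map_multiset_prod]
    exact map_dvd _ hdvd
  have hp₀' : ρ p₀ ∈ m' := Multiset.mem_map_of_mem _ hp₀
  have hdeg0 : MvPolynomial.degreeOf 0 (ρ p₀) ≠ 0 := by
    have h1 := MvPolynomial.degreeOf_rename_of_injective (p := p₀) hσinj i
    rw [hσi] at h1
    rw [hρapp, h1]
    exact hi
  clear hdvd hirr hnass hs hd hf hp₀
  -- now work via finSuccEquiv
  set E := MvPolynomial.finSuccEquiv F n' with hE
  set P := E f' with hP
  have hP0 : P ≠ 0 := by
    rw [hP]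
    exact fun h => hf'0 (by simpa using congrArg ⇑E.symm h)
  have hEne : ∀ p ∈ m', E p ≠ 0 := by
    intro p hp h
    exact (hirr' p hp).ne_zero (by simpa using congrArg ⇑E.symm h)
  set q : MvPolynomial (Fin (n'+1)) F → Prop := fun p => MvPolynomial.degreeOf 0 p ≠ 0 with hq
  set mB := m'.filter q with hmB
  set mA := m'.filter (fun p => ¬ q p) with hmA
  have hmsplit : mB + mA = m' := by rw [hmB, hmA, Multiset.filter_add_not]
  -- card mB ≤ d
  have hcardB : Multiset.card mB ≤ d := by
    have h1 : (E m'.prod).natDegree ≤ P.natDegree :=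
      Polynomial.natDegree_le_of_dvd (_root_.map_dvd _ hdvd') hP0
    have h2 : P.natDegree ≤ d := by
      rw [hP, hE, natDegree_finSuccEquiv]; exact hd' 0
    have h3 : E m'.prod = (m'.map ⇑E).prod := map_multiset_prod _ _
    have h4 : (m'.map ⇑E).prod.natDegree = ((m'.map ⇑E).map Polynomial.natDegree).sum := by
      refine Polynomial.natDegree_multiset_prod _ ?_
      intro h0
      obtain ⟨p, hp, hp0⟩ := Multiset.mem_map.mp h0
      exact hEne p hp hp0
    have h5 : Multiset.card mB ≤ ((m'.map ⇑E).map Polynomial.natDegree).sum := by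
      rw [Multiset.map_map, ← hmsplit, Multiset.map_add, Multiset.sum_add]
      have h6 : Multiset.card mB ≤ (mB.map fun p => (E p).natDegree).sum := by
        rw [show Multiset.card mB = Multiset.card (mB.map fun p => (E p).natDegree) by
          rw [Multiset.card_map]]
        refine card_le_sum_of _ ?_
        intro x hx
        obtain ⟨p, hp, rfl⟩ := Multiset.mem_map.mp hx
        have := Multiset.of_mem_filter hp
        rw [hE, natDegree_finSuccEquiv]
        omega
      exact le_trans h6 (Nat.le_add_right _ _)
    rw [h3, h4] at h1
    omega
  -- the multiset M of constant parts of mA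
  set M : Multiset (MvPolynomial (Fin n') F) := mA.map (fun p => (E p).coeff 0) with hM
  have hmemA : ∀ p ∈ mA, p ∈ m' := fun p hp => Multiset.mem_of_mem_filter hp
  have hqC : ∀ p ∈ mA, E p = Polynomial.C ((E p).coeff 0) := by
    intro p hp
    refine Polynomial.eq_C_of_natDegree_eq_zero ?_
    rw [hE, natDegree_finSuccEquiv]
    have hp2 : p ∈ Multiset.filter (fun p => ¬ q p) m' := by rw [← hmA]; exact hp
    have hp3 := Multiset.of_mem_filter (p := fun p => ¬ q p) hp2
    simp only [hq, not_not] at hp3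
    exact hp3
  have hCM : E mA.prod = Polynomial.C M.prod := by
    rw [map_multiset_prod, map_multiset_prod (Polynomial.C : MvPolynomial (Fin n') F →+* _) M,
      hM, Multiset.map_map]
    exact congrArg Multiset.prod (Multiset.map_congr rfl hqC)
  have hMdvdP : Polynomial.C M.prod ∣ P := by
    rw [← hCM]
    refine _root_.map_dvd _ (dvd_trans ?_ hdvd')
    exact Multiset.prod_dvd_prod_of_le (Multiset.filter_le _ m')
  obtain ⟨Q, hQ⟩ := hMdvdP
  have hlcd : M.prod ∣ P.leadingCoeff :=
    ⟨Q.leadingCoeff, by rw [hQ, Polynomial.leadingCoeff_mul, Polynomial.leadingCoeff_C]⟩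
  have htcC : (Polynomial.C M.prod : Polynomial (MvPolynomial (Fin n') F)).trailingCoeff
      = M.prod := by
    rw [Polynomial.trailingCoeff, Polynomial.natTrailingDegree_C, Polynomial.coeff_C_zero]
  have htcd : M.prod ∣ P.trailingCoeff :=
    ⟨Q.trailingCoeff, by rw [hQ, Polynomial.trailingCoeff_mul, htcC]⟩
  -- facts about E p₀'
  have hEp₀dvd : E (ρ p₀) ∣ P := _root_.map_dvd _ (dvd_trans (Multiset.dvd_prod hp₀') hdvd')
  have hEp₀irr : Irreducible (E (ρ p₀)) := (hirr' _ hp₀').map E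
  have hEp₀deg : 1 ≤ (E (ρ p₀)).natDegree := by
    rw [hE, natDegree_finSuccEquiv]; omega
  have hEp₀X : ¬ Associated (E (ρ p₀)) Polynomial.X := by
    intro h
    refine hnass' _ hp₀' 0 ?_
    have h2 := assoc_map_hom E.symm h
    rw [AlgEquiv.symm_apply_apply] at h2
    rwa [show E.symm Polynomial.X = MvPolynomial.X 0 by
      rw [hE, ← finSuccEquiv_X_zero (R := F) (n := n'), AlgEquiv.symm_apply_apply]] at h2
  -- trailing degree < degree
  have hlt : P.natTrailingDegree < P.natDegree := by
    by_contra hge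
    have heq : P.natTrailingDegree = P.natDegree :=
      le_antisymm (Polynomial.natTrailingDegree_le_natDegree P) (not_lt.mp hge)
    have hPform : P = Polynomial.C P.leadingCoeff * Polynomial.X ^ P.natDegree := by
      refine Polynomial.ext fun k => ?_
      rw [Polynomial.coeff_C_mul, Polynomial.coeff_X_pow]
      by_cases hk : k = P.natDegree
      · subst hk; rw [if_pos rfl, mul_one]; rfl
      · simp only [hk, if_false, mul_zero]
        rcases lt_or_gt_of_ne hk with h | h
        · exact Polynomial.coeff_eq_zero_of_lt_natTrailingDegree (by omega)
        · exact Polynomial.coeff_eq_zero_of_natDegree_lt h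
    have hprime : Prime (E (ρ p₀)) :=
      (UniqueFactorizationMonoid.irreducible_iff_prime).mp hEp₀irr
    rcases hprime.2.2 _ _ (hPform ▸ hEp₀dvd) with hC | hX
    · have hlc0 : Polynomial.C P.leadingCoeff ≠ (0 : Polynomial (MvPolynomial (Fin n') F)) := by
        simp [Polynomial.leadingCoeff_ne_zero.mpr hP0]
      have := Polynomial.natDegree_le_of_dvd hC hlc0
      rw [Polynomial.natDegree_C] at this
      omega
    · exact hEp₀X (hEp₀irr.associated_of_dvd Polynomial.irreducible_X
        (hprime.dvd_of_dvd_pow hX))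
  -- sparsity split
  have hsplit : P.leadingCoeff.support.card + P.trailingCoeff.support.card ≤ s := by
    have h1 := card_support_coeffs_le (F := F) f' (i := (E f').natDegree)
      (j := (E f').natTrailingDegree) (by rw [← hP]; omega)
    rw [← hE, ← hP] at h1
    exact le_trans h1 hs'
  set sL := P.leadingCoeff.support.card with hsL
  set sT := P.trailingCoeff.support.card with hsT
  set sg := min sL sT with hsg
  have hlc0 : P.leadingCoeff ≠ 0 := Polynomial.leadingCoeff_ne_zero.mpr hP0
  have htc0 : P.trailingCoeff ≠ 0 := fun h => hP0 (Polynomial.trailingCoeff_eq_zero.mp h)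
  have hsL1 : 1 ≤ sL := by
    rw [hsL, Nat.succ_le_iff, Finset.card_pos, Finset.nonempty_iff_ne_empty]
    exact fun h => hlc0 (support_eq_empty.mp h)
  have hsT1 : 1 ≤ sT := by
    rw [hsT, Nat.succ_le_iff, Finset.card_pos, Finset.nonempty_iff_ne_empty]
    exact fun h => htc0 (support_eq_empty.mp h)
  have hsg1 : 1 ≤ sg := le_min hsL1 hsT1
  have hsg2 : 2 * sg ≤ s := by omega
  set g := if sL ≤ sT then P.leadingCoeff else P.trailingCoeff with hg
  have hgcard : g.support.card ≤ sg := by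
    rw [hg]; split <;> omega
  have hgdvd : M.prod ∣ g := by rw [hg]; split <;> assumption
  have hg0 : g ≠ 0 := by rw [hg]; split <;> assumption
  have hgcoeff : ∃ k, g = P.coeff k := by
    rw [hg]; split
    · exact ⟨P.natDegree, rfl⟩
    · exact ⟨P.natTrailingDegree, rfl⟩
  have hgd : ∀ j, MvPolynomial.degreeOf j g ≤ d := by
    intro j
    obtain ⟨k, hk⟩ := hgcoeff
    rw [hk, hP, hE]
    exact le_trans (degreeOf_coeff_finSuccEquiv f' j k) (hd' _)
  -- hypotheses for M
  have hirrM : ∀ r ∈ M, Irreducible r := by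
    intro r hr
    obtain ⟨p, hp, rfl⟩ := Multiset.mem_map.mp hr
    have h1 : Irreducible (E p) := (hirr' p (hmemA p hp)).map E
    rw [hqC p hp] at h1
    exact irreducible_of_irreducible_C h1
  have hnassM : ∀ r ∈ M, ∀ j, ¬ Associated r (MvPolynomial.X j) := by
    intro r hr j hassoc
    obtain ⟨p, hp, rfl⟩ := Multiset.mem_map.mp hr
    have h1 := assoc_map_hom (Polynomial.C : MvPolynomial (Fin n') F →+* _) hassoc
    rw [← hqC p hp] at h1
    rw [show (Polynomial.C (MvPolynomial.X j) : Polynomial (MvPolynomial (Fin n') F))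
        = E (MvPolynomial.X j.succ) by rw [hE, finSuccEquiv_X_succ]] at h1
    have h2 := assoc_map_hom E.symm h1
    rw [AlgEquiv.symm_apply_apply, AlgEquiv.symm_apply_apply] at h2
    exact hnass' p (hmemA p hp) j.succ h2
  -- apply IH
  have hrec := IH sg (by omega) n' g hg0 hgcard hgd M hirrM hnassM hgdvd
  -- final arithmetic
  have hcards : Multiset.card m = Multiset.card M + Multiset.card mB := by
    have h1 : Multiset.card m' = Multiset.card m := by rw [hm'def, Multiset.card_map]
    have h2 : Multiset.card mB + Multiset.card mA = Multiset.card m' := by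
      rw [← Multiset.card_add, hmsplit]
    have h3 : Multiset.card M = Multiset.card mA := by rw [hM, Multiset.card_map]
    omega
  rw [hcards]
  push_cast
  have hlogb : Real.logb 2 sg + 1 ≤ Real.logb 2 s := by
    have h1 : Real.logb 2 ((2 * sg : ℕ) : ℝ) ≤ Real.logb 2 s := by
      refine Real.logb_le_logb_of_le one_lt_two ?_ ?_
      · have h0 : (0:ℕ) < 2 * sg := by omega
        exact_mod_cast h0
      · exact_mod_cast hsg2
    rw [show ((2 * sg : ℕ) : ℝ) = 2 * (sg : ℝ) by push_cast; ring,
      Real.logb_mul (by norm_num) (Nat.cast_ne_zero.mpr (by omega)),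
      Real.logb_self_eq_one one_lt_two] at h1
    linarith
  have hBd : (Multiset.card mB : ℝ) ≤ d := by exact_mod_cast hcardB
  have hd0 : (0:ℝ) ≤ d := Nat.cast_nonneg d
  linarith [hrec, hBd, mul_le_mul_of_nonneg_left hlogb hd0]

end main

/-- If `f` is a nonzero `s`-sparse polynomial of individual degree at most `d`,
not divisible by any variable, then the number of irreducible factors of `f`,
counted with multiplicity, is at most `d · log₂ s`. -/
theorem stmt10 {F : Type*} [Field F] {n s d : ℕ} (f : MvPolynomial (Fin n) F)
    (hf : f ≠ 0) (hs : f.support.card ≤ s) (hd : ∀ i, MvPolynomial.degreeOf i f ≤ d)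
    (hmon : ∀ i, ¬ (MvPolynomial.X i ∣ f))
    (m : Multiset (MvPolynomial (Fin n) F)) (hirr : ∀ p ∈ m, Irreducible p)
    (hprod : Associated m.prod f) :
    (Multiset.card m : ℝ) ≤ d * Real.logb 2 s := by
  refine good d s n f hf hs hd m hirr ?_ hprod.dvd
  intro p hp j hassoc
  exact hmon j (dvd_trans (dvd_trans hassoc.symm.dvd (Multiset.dvd_prod hp)) hprod.dvd)
end

section
/- Let f ∈ F[x_1,...,x_n] be an s-sparse polynomial with individual degree at most d, not divisible by any variable. Then the number of divisors of f (up to associates) that are not divisible by any monomial is at most s^d. -/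
open MvPolynomial

namespace Stmt11Aux

variable {F : Type*} [Field F]

private lemma algEquiv_dvd_iff {A B : Type*} [CommSemiring A] [CommSemiring B] [Algebra F A]
    [Algebra F B] (e : A ≃ₐ[F] B) {a b : A} : e a ∣ e b ↔ a ∣ b :=
  ⟨fun h => by simpa using map_dvd e.symm h, fun h => map_dvd e h⟩

private lemma algEquiv_isUnit_iff {A B : Type*} [CommSemiring A] [CommSemiring B] [Algebra F A]
    [Algebra F B] (e : A ≃ₐ[F] B) {a : A} : IsUnit (e a) ↔ IsUnit a :=
  ⟨fun h => by simpa using h.map e.symm.toAlgHom, fun h => h.map e.toAlgHom⟩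

private lemma algEquiv_ne_zero {A B : Type*} [CommSemiring A] [CommSemiring B] [Algebra F A]
    [Algebra F B] (e : A ≃ₐ[F] B) {a : A} (ha : a ≠ 0) : e a ≠ 0 := by
  intro h
  apply ha
  simpa using congrArg e.symm h

/-- A nonzero nonunit multivariate polynomial over a field has a variable of positive degree. -/
private lemma exists_degreeOf_pos {n : ℕ} {g : MvPolynomial (Fin n) F} (hg0 : g ≠ 0)
    (hgu : ¬ IsUnit g) : ∃ j, 0 < g.degreeOf j := by
  by_contra h
  push_neg at h
  have hsupp : ∀ e ∈ g.support, e = 0 := by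
    intro e he
    ext j
    exact Nat.le_zero.mp (degreeOf_le_iff.mp (Nat.le_zero.mp (h j)).le e he)
  have hgC : g = C (coeff 0 g) := by
    apply MvPolynomial.ext
    intro e
    rcases eq_or_ne e 0 with rfl | he
    · simp
    · have h1 : e ∉ g.support := fun hmem => he (hsupp e hmem)
      rw [MvPolynomial.notMem_support_iff.mp h1, MvPolynomial.coeff_C, if_neg (Ne.symm he)]
  have hc : coeff 0 g ≠ 0 := by
    intro h0
    apply hg0
    rw [hgC, h0, map_zero]
  exact hgu (hgC ▸ (isUnit_iff_ne_zero.mpr hc).map (C : F →+* MvPolynomial (Fin n) F))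

/-- Key lemma: if `f` is nonzero with at most `t` monomials and individual degrees at most `d`,
and `G` is a multiset of nonunit monomial-free polynomials whose product divides `f`,
then `2 ^ |G| ≤ t ^ d`. -/
private lemma key (d : ℕ) : ∀ t n : ℕ, ∀ f : MvPolynomial (Fin n) F, f ≠ 0 →
    f.support.card ≤ t → (∀ i, f.degreeOf i ≤ d) →
    ∀ G : Multiset (MvPolynomial (Fin n) F),
      (∀ g ∈ G, ¬ IsUnit g ∧ ∀ i, ¬ MvPolynomial.X i ∣ g) →
      G.prod ∣ f → 2 ^ Multiset.card G ≤ t ^ d := by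
  classical
  intro t
  induction t using Nat.strong_induction_on with
  | _ t IH =>
  intro n f hf hft hfd G hGel hGf
  have hscard : 0 < f.support.card :=
    Finset.card_pos.mpr (Finset.nonempty_iff_ne_empty.mpr (fun h => hf (support_eq_empty.mp h)))
  have ht1 : 1 ≤ t := le_trans hscard hft
  rcases eq_or_ne G 0 with rfl | hG0
  · simpa using Nat.one_le_pow d t ht1
  obtain ⟨g₀, hg₀G⟩ := Multiset.exists_mem_of_ne_zero hG0
  have hg₀ := hGel g₀ hg₀G
  have hg₀f : g₀ ∣ f := (Multiset.dvd_prod hg₀G).trans hGf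
  have hg₀0 : g₀ ≠ 0 := by rintro rfl; exact hf (zero_dvd_iff.mp hg₀f)
  obtain ⟨j, hj⟩ := exists_degreeOf_pos hg₀0 hg₀.1
  obtain ⟨m, rfl⟩ : ∃ m, n = m + 1 := ⟨n - 1, by have := j.pos; omega⟩
  -- Rename variables so that the distinguished variable is `0`.
  set σe : Fin (m + 1) ≃ Fin (m + 1) := Equiv.swap j 0 with hσe
  set Er : MvPolynomial (Fin (m + 1)) F ≃ₐ[F] MvPolynomial (Fin (m + 1)) F :=
    renameEquiv F σe with hEr
  have hEr_apply : ∀ p : MvPolynomial (Fin (m + 1)) F, Er p = rename σe p := fun _ => rfl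
  set f1 : MvPolynomial (Fin (m + 1)) F := Er f with hf1def
  set G1 : Multiset (MvPolynomial (Fin (m + 1)) F) := G.map ⇑Er with hG1def
  have hf1 : f1 ≠ 0 := algEquiv_ne_zero Er hf
  have hft1 : f1.support.card ≤ t := by
    rw [hf1def, hEr_apply, support_rename_of_injective σe.injective,
      Finset.card_image_of_injective _ (Finsupp.mapDomain_injective σe.injective)]
    exact hft
  have hfd1 : ∀ i, f1.degreeOf i ≤ d := by
    intro i
    have := degreeOf_rename_of_injective (p := f) σe.injective (σe.symm i)
    rw [Equiv.apply_symm_apply] at this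
    rw [hf1def, hEr_apply, this]
    exact hfd _
  have hG1el : ∀ g ∈ G1, ¬ IsUnit g ∧ ∀ i, ¬ MvPolynomial.X i ∣ g := by
    intro g hg
    obtain ⟨g', hg'G, rfl⟩ := Multiset.mem_map.mp hg
    refine ⟨fun h => (hGel g' hg'G).1 ((algEquiv_isUnit_iff Er).mp h), fun i hdvd => ?_⟩
    have hXi : Er (MvPolynomial.X (σe.symm i)) = MvPolynomial.X i := by
      rw [hEr_apply, rename_X, Equiv.apply_symm_apply]
    rw [← hXi] at hdvd
    exact (hGel g' hg'G).2 (σe.symm i) ((algEquiv_dvd_iff Er).mp hdvd)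
  have hG1f : G1.prod ∣ f1 := by
    rw [hG1def, ← map_multiset_prod]
    exact map_dvd Er.toAlgHom hGf
  have hG1card : Multiset.card G1 = Multiset.card G := Multiset.card_map _ _
  set g1 : MvPolynomial (Fin (m + 1)) F := Er g₀ with hg1def
  have hg1G1 : g1 ∈ G1 := Multiset.mem_map_of_mem _ hg₀G
  have hg1deg : 0 < g1.degreeOf 0 := by
    have := degreeOf_rename_of_injective (p := g₀) σe.injective j
    rw [show σe j = 0 from Equiv.swap_apply_left j 0] at this
    rw [hg1def, hEr_apply, this]
    exact hj
  clear_value G1 f1 g1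
  -- Now work through `finSuccEquiv`.
  set E : MvPolynomial (Fin (m + 1)) F ≃ₐ[F] Polynomial (MvPolynomial (Fin m) F) :=
    finSuccEquiv F m with hEdef
  have hG1nz : ∀ g ∈ G1, g ≠ 0 := by
    intro g hg h0
    apply hf1
    rw [← zero_dvd_iff]
    calc (0 : MvPolynomial (Fin (m+1)) F) = g := h0.symm
    _ ∣ G1.prod := Multiset.dvd_prod hg
    _ ∣ f1 := hG1f
  -- split G1 into the factors involving variable 0 and the rest
  set P : MvPolynomial (Fin (m + 1)) F → Prop := fun g => degreeOf 0 g = 0 with hP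
  set B : Multiset (MvPolynomial (Fin (m + 1)) F) := G1.filter P with hBdef
  set A : Multiset (MvPolynomial (Fin (m + 1)) F) := G1.filter (fun g => ¬ P g) with hAdef
  have hABG : B + A = G1 := Multiset.filter_add_not P G1
  -- `A` has at most `d` elements
  have hAcard : Multiset.card A ≤ d := by
    have hA_dvd : A.prod ∣ f1 := (Multiset.prod_dvd_prod_of_le (Multiset.filter_le _ G1)).trans hG1f
    have h0A : (0 : Polynomial (MvPolynomial (Fin m) F)) ∉ A.map ⇑E := by
      intro h
      obtain ⟨g, hgA, hg0⟩ := Multiset.mem_map.mp h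
      exact hG1nz g (Multiset.mem_of_mem_filter hgA) (by simpa using congrArg E.symm hg0)
    have hsum : (Multiset.map Polynomial.natDegree (A.map ⇑E)).sum = (E A.prod).natDegree := by
      rw [map_multiset_prod, Polynomial.natDegree_multiset_prod _ h0A]
    have hle : (E A.prod).natDegree ≤ d := by
      refine le_trans (Polynomial.natDegree_le_of_dvd ?_ (algEquiv_ne_zero E hf1)) ?_
      · exact map_dvd E.toAlgHom hA_dvd
      · rw [hEdef, natDegree_finSuccEquiv]; exact hfd1 0
    have hone : ∀ x ∈ Multiset.map Polynomial.natDegree (A.map ⇑E), 1 ≤ x := by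
      intro x hx
      obtain ⟨p, hp, rfl⟩ := Multiset.mem_map.mp hx
      obtain ⟨g, hgA, rfl⟩ := Multiset.mem_map.mp hp
      have : ¬ P g := by
        have h := hgA
        rw [hAdef, Multiset.mem_filter] at h
        exact h.2
      rw [hEdef, natDegree_finSuccEquiv]
      omega
    have := Multiset.card_nsmul_le_sum hone
    simp only [smul_eq_mul, mul_one, Multiset.card_map] at this
    omega
  -- decompose f1 = g1 * r
  obtain ⟨r, hr⟩ : g1 ∣ f1 := (Multiset.dvd_prod hg1G1).trans hG1f
  have hr0 : r ≠ 0 := by rintro rfl; rw [mul_zero] at hr; exact hf1 hr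
  have hg1E0 : (E g1).natTrailingDegree = 0 := by
    have hnd : ¬ Polynomial.X ∣ E g1 := by
      rw [← finSuccEquiv_X_zero (R := F) (n := m), ← hEdef]
      intro h
      exact (hG1el g1 hg1G1).2 0 ((algEquiv_dvd_iff E).mp h)
    rw [Polynomial.X_dvd_iff] at hnd
    exact Polynomial.natTrailingDegree_eq_zero.mpr (Or.inr hnd)
  have hg1End : 1 ≤ (E g1).natDegree := by
    rw [hEdef, natDegree_finSuccEquiv]; omega
  set q : Polynomial (MvPolynomial (Fin m) F) := E f1 with hq
  have hq0 : q ≠ 0 := algEquiv_ne_zero E hf1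
  have hg1Enz : E g1 ≠ 0 := algEquiv_ne_zero E (hG1nz g1 hg1G1)
  have hrEnz : E r ≠ 0 := algEquiv_ne_zero E hr0
  have hqmul : q = E g1 * E r := by rw [hq, hr, map_mul]
  have hk12 : q.natTrailingDegree < q.natDegree := by
    rw [hqmul, Polynomial.natTrailingDegree_mul hg1Enz hrEnz, Polynomial.natDegree_mul hg1Enz hrEnz,
      hg1E0, zero_add]
    have h1 := Polynomial.natTrailingDegree_le_natDegree (E r)
    omega
  -- the two slices
  set b : MvPolynomial (Fin m) F := q.trailingCoeff with hbdef
  set tc : MvPolynomial (Fin m) F := q.leadingCoeff with htcdef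
  have hb0 : b ≠ 0 := fun h => hq0 (Polynomial.trailingCoeff_eq_zero.mp h)
  have htc0 : tc ≠ 0 := fun h => hq0 (Polynomial.leadingCoeff_eq_zero.mp h)
  -- support cards of slices
  have hslice : ∀ k : ℕ, ((q.coeff k).support.card =
      (f1.support.filter (fun e => e 0 = k)).card) := by
    intro k
    rw [← image_support_finSuccEquiv (f := f1) (i := k), Finset.card_image_of_injective _
      (Finsupp.cons_right_injective k), hq, hEdef]
  have hcards : b.support.card + tc.support.card ≤ f1.support.card := by
    have hbc : b.support.card = (f1.support.filter (fun e => e 0 = q.natTrailingDegree)).card :=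
      hslice q.natTrailingDegree
    have htcc : tc.support.card = (f1.support.filter (fun e => e 0 = q.natDegree)).card :=
      hslice q.natDegree
    rw [hbc, htcc, ← Finset.card_union_of_disjoint]
    · exact Finset.card_le_card (Finset.union_subset (Finset.filter_subset _ _)
        (Finset.filter_subset _ _))
    · rw [Finset.disjoint_left]
      intro e h1 h2
      rw [Finset.mem_filter] at h1 h2
      omega
  have hsum_t : b.support.card + tc.support.card ≤ t := le_trans hcards hft1
  have hsb1 : 1 ≤ b.support.card :=
    Finset.card_pos.mpr (Finset.nonempty_iff_ne_empty.mpr (fun h => hb0 (support_eq_empty.mp h)))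
  have hst1 : 1 ≤ tc.support.card :=
    Finset.card_pos.mpr (Finset.nonempty_iff_ne_empty.mpr (fun h => htc0 (support_eq_empty.mp h)))
  -- lower the factors in B to polynomials in one fewer variable
  set L : MvPolynomial (Fin (m + 1)) F → MvPolynomial (Fin m) F :=
    fun g => (E g).coeff 0 with hLdef
  set G2 : Multiset (MvPolynomial (Fin m) F) := B.map L with hG2def
  have hG2card : Multiset.card G2 = Multiset.card B := Multiset.card_map _ _
  have hEC : ∀ g ∈ B, E g = Polynomial.C (L g) := by
    intro g hgB
    have hgP : P g := by
      have h := hgB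
      rw [hBdef, Multiset.mem_filter] at h
      exact h.2
    have hnd : (E g).natDegree = 0 := by rw [hEdef, natDegree_finSuccEquiv]; exact hgP
    exact Polynomial.eq_C_of_natDegree_eq_zero hnd
  have hG2el : ∀ x ∈ G2, ¬ IsUnit x ∧ ∀ i, ¬ MvPolynomial.X i ∣ x := by
    intro x hx
    obtain ⟨g, hgB, rfl⟩ := Multiset.mem_map.mp hx
    have hgG1 : g ∈ G1 := Multiset.mem_of_mem_filter (hBdef ▸ hgB)
    constructor
    · intro hu
      apply (hG1el g hgG1).1
      rw [← algEquiv_isUnit_iff E, hEC g hgB]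
      exact hu.map (Polynomial.C : MvPolynomial (Fin m) F →+* Polynomial (MvPolynomial (Fin m) F))
    · intro i hdvd
      apply (hG1el g hgG1).2 i.succ
      rw [← algEquiv_dvd_iff E, hEC g hgB, hEdef, finSuccEquiv_X_succ]
      exact map_dvd (Polynomial.C : MvPolynomial (Fin m) F →+* Polynomial (MvPolynomial (Fin m) F))
        hdvd
  have hEB : E B.prod = Polynomial.C G2.prod := by
    rw [map_multiset_prod]
    have h1 : B.map ⇑E = G2.map ⇑(Polynomial.C : MvPolynomial (Fin m) F →+*
        Polynomial (MvPolynomial (Fin m) F)) := by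
      rw [hG2def, Multiset.map_map]
      exact Multiset.map_congr rfl (fun g hgB => hEC g hgB)
    rw [h1, ← map_multiset_prod]
  obtain ⟨w, hfw⟩ : B.prod ∣ f1 :=
    (Multiset.prod_dvd_prod_of_le (Multiset.filter_le _ G1)).trans hG1f
  have hqB : q = Polynomial.C G2.prod * E w := by rw [hq, hfw, map_mul, hEB]
  have htC : ∀ x : MvPolynomial (Fin m) F, (Polynomial.C x).trailingCoeff = x := fun x => by
    rw [Polynomial.trailingCoeff, Polynomial.natTrailingDegree_C, Polynomial.coeff_C_zero]
  have hG2b : G2.prod ∣ b := by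
    refine ⟨(E w).trailingCoeff, ?_⟩
    rw [hbdef, hqB, Polynomial.trailingCoeff_mul, htC]
  have hG2tc : G2.prod ∣ tc := by
    refine ⟨(E w).leadingCoeff, ?_⟩
    rw [htcdef, hqB, Polynomial.leadingCoeff_mul, Polynomial.leadingCoeff_C]
  -- degree bounds for the slices
  have hbd : ∀ i, b.degreeOf i ≤ d := by
    intro i
    have hbeq : b = ((finSuccEquiv F m) f1).coeff q.natTrailingDegree := by
      rw [hbdef, Polynomial.trailingCoeff, hq, hEdef]
    rw [hbeq]
    exact le_trans (degreeOf_coeff_finSuccEquiv f1 i _) (hfd1 i.succ)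
  have htcd : ∀ i, tc.degreeOf i ≤ d := by
    intro i
    have htceq : tc = ((finSuccEquiv F m) f1).coeff q.natDegree := by
      rw [htcdef, Polynomial.leadingCoeff, hq, hEdef]
    rw [htceq]
    exact le_trans (degreeOf_coeff_finSuccEquiv f1 i _) (hfd1 i.succ)
  -- assemble
  have hGsplit : Multiset.card G = Multiset.card B + Multiset.card A := by
    rw [← hG1card, ← hABG, Multiset.card_add]
  have hmain : ∀ c : MvPolynomial (Fin m) F, c ≠ 0 → (∀ i, c.degreeOf i ≤ d) → G2.prod ∣ c →
      2 * c.support.card ≤ t → 2 ^ Multiset.card G ≤ t ^ d := by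
    intro c hc0 hcd hG2c h2c
    have hIH := IH c.support.card (by omega) m c hc0 le_rfl hcd G2 hG2el hG2c
    calc 2 ^ Multiset.card G = 2 ^ Multiset.card B * 2 ^ Multiset.card A := by
          rw [hGsplit, pow_add]
    _ ≤ c.support.card ^ d * 2 ^ d := by
          refine Nat.mul_le_mul ?_ (Nat.pow_le_pow_right (by norm_num) hAcard)
          rw [← hG2card]
          exact hIH
    _ = (2 * c.support.card) ^ d := by rw [mul_pow, mul_comm]
    _ ≤ t ^ d := Nat.pow_le_pow_left h2c d
  rcases le_total b.support.card tc.support.card with hmin | hmin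
  · exact hmain b hb0 hbd hG2b (by omega)
  · exact hmain tc htc0 htcd hG2tc (by omega)

end Stmt11Aux


open UniqueFactorizationMonoid

/-- If `f` is a nonzero `s`-sparse polynomial of individual degree at most `d`, not divisible
by any variable, then the number of pairwise non-associate divisors of `f` that are not
divisible by any variable is at most `s ^ d`. -/
theorem stmt11 {F : Type*} [Field F] {n s d : ℕ} (f : MvPolynomial (Fin n) F)
    (hf : f ≠ 0) (hs : f.support.card ≤ s) (hd : ∀ i, MvPolynomial.degreeOf i f ≤ d)
    (hmon : ∀ i, ¬ (MvPolynomial.X i ∣ f))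
    (D : Finset (MvPolynomial (Fin n) F))
    (hDdvd : ∀ g ∈ D, g ∣ f)
    (hDmon : ∀ g ∈ D, ∀ i, ¬ (MvPolynomial.X i ∣ g))
    (hDassoc : ∀ g ∈ D, ∀ h ∈ D, g ≠ h → ¬ Associated g h) :
    D.card ≤ s ^ d := by
  classical
  letI : NormalizationMonoid (MvPolynomial (Fin n) F) :=
    UniqueFactorizationMonoid.normalizationMonoid.toNormalizationMonoid
  set M' : Multiset (MvPolynomial (Fin n) F) :=
    (normalizedFactors f).filter (fun p => ∀ i, ¬ MvPolynomial.X i ∣ p) with hM'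
  have hmapsto : ∀ g ∈ D, normalizedFactors g ∈ M'.powerset.toFinset := by
    intro g hg
    have hg0 : g ≠ 0 := fun h => hf (zero_dvd_iff.mp (h ▸ hDdvd g hg))
    rw [Multiset.mem_toFinset, Multiset.mem_powerset, hM', Multiset.le_filter]
    constructor
    · exact (dvd_iff_normalizedFactors_le_normalizedFactors hg0 hf).mp (hDdvd g hg)
    · intro p hp i hdvd
      exact hDmon g hg i (hdvd.trans (dvd_of_mem_normalizedFactors hp))
  have hinj : Set.InjOn (fun g => normalizedFactors g) (D : Set (MvPolynomial (Fin n) F)) := by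
    intro g hg h hh heq
    by_contra hne
    refine hDassoc g (by simpa using hg) h (by simpa using hh) hne ?_
    have hg0 : g ≠ 0 := fun h0 => hf (zero_dvd_iff.mp (h0 ▸ hDdvd g (by simpa using hg)))
    have hh0 : h ≠ 0 := fun h0 => hf (zero_dvd_iff.mp (h0 ▸ hDdvd h (by simpa using hh)))
    have h1 : Associated (normalizedFactors g).prod g := prod_normalizedFactors hg0
    have h2 : Associated (normalizedFactors h).prod h := prod_normalizedFactors hh0
    simp only at heq
    exact h1.symm.trans (heq ▸ h2)
  have hcard1 : D.card ≤ 2 ^ Multiset.card M' := by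
    calc D.card ≤ M'.powerset.toFinset.card :=
          Finset.card_le_card_of_injOn _ hmapsto hinj
    _ ≤ Multiset.card M'.powerset := Multiset.toFinset_card_le _
    _ = 2 ^ Multiset.card M' := Multiset.card_powerset M'
  refine le_trans hcard1 (Stmt11Aux.key d s n f hf hs hd M' ?_ ?_)
  · intro g hg
    rw [hM', Multiset.mem_filter] at hg
    exact ⟨(irreducible_of_normalized_factor g hg.1).not_isUnit, hg.2⟩
  · refine dvd_trans (Multiset.prod_dvd_prod_of_le ?_) (prod_normalizedFactors hf).dvd
    rw [hM']
    exact Multiset.filter_le _ _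
end

section
/- Let P be a set of polynomials in F[x_1,...,x_n]. Then every f ∈ P can be written as a product of primitive divisors for P, and this factorization is unique up to reordering and multiplication by units. -/
/-- Two multivariate polynomials have no common non-unit divisor (gcd-coprimality). -/
def RelPrime {F : Type*} [Field F] {n : ℕ} (a b : MvPolynomial (Fin n) F) : Prop :=
  ∀ c : MvPolynomial (Fin n) F, c ∣ a → c ∣ b → IsUnit c

/-- Condition (1) of being a primitive divisor for a class `P`: every `f ∈ P` can be
written as `g ^ k * g̃` with `g̃` coprime to `g`. -/
def IsPowerDivisorOfAll {F : Type*} [Field F] {n : ℕ}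
    (P : Set (MvPolynomial (Fin n) F)) (g : MvPolynomial (Fin n) F) : Prop :=
  ∀ f ∈ P, ∃ (k : ℕ) (r : MvPolynomial (Fin n) F), RelPrime g r ∧ f = g ^ k * r

/-- `g` is a primitive divisor for the class `P`: every `f ∈ P` is `g ^ k` times a
polynomial coprime to `g`, and no non-scalar polynomial multiple of `g` has this property. -/
def IsPrimitiveDivisor {F : Type*} [Field F] {n : ℕ}
    (P : Set (MvPolynomial (Fin n) F)) (g : MvPolynomial (Fin n) F) : Prop :=
  IsPowerDivisorOfAll P g ∧
    ∀ h : MvPolynomial (Fin n) F, g ∣ h → ¬ Associated g h → ¬ IsPowerDivisorOfAll P h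

section Generic

open UniqueFactorizationMonoid

variable {α : Type*} [CommMonoidWithZero α] [UniqueFactorizationMonoid α]

noncomputable local instance instNormMon : NormalizationMonoid α :=
  UniqueFactorizationMonoid.normalizationMonoid.toNormalizationMonoid

noncomputable local instance instDecEq : DecidableEq α := Classical.decEq α

/-- Generic version of `IsPowerDivisorOfAll`. -/
def PowAll (P : Set α) (g : α) : Prop :=
  ∀ f ∈ P, ∃ (k : ℕ) (r : α), IsRelPrime g r ∧ f = g ^ k * r

/-- Generic version of `IsPrimitiveDivisor`. -/
def PrimDiv (P : Set α) (g : α) : Prop :=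
  PowAll P g ∧ ∀ h : α, g ∣ h → ¬ Associated g h → ¬ PowAll P h

theorem count_powAll_rep {g r f p : α} {a : ℕ} (hf0 : f ≠ 0) (hg0 : g ≠ 0)
    (heq : f = g ^ a * r) (hrel : IsRelPrime g r) (hp : Prime p) (hpg : p ∣ g) :
    Multiset.count p (normalizedFactors f) = a * Multiset.count p (normalizedFactors g) := by
  have hr0 : r ≠ 0 := by rintro rfl; rw [mul_zero] at heq; exact hf0 heq
  have hnot : p ∉ normalizedFactors r := fun hmem =>
    hp.not_isUnit (hrel hpg (dvd_of_mem_normalizedFactors hmem))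
  rw [heq, normalizedFactors_mul (pow_ne_zero _ hg0) hr0, normalizedFactors_pow,
    Multiset.count_add, Multiset.count_nsmul, Multiset.count_eq_zero_of_notMem hnot, add_zero]

theorem mem_nf_iff {p x : α} (hp : Prime p) (hpn : normalize p = p) (hx : x ≠ 0) :
    p ∈ normalizedFactors x ↔ p ∣ x := by
  constructor
  · exact dvd_of_mem_normalizedFactors
  · intro h
    obtain ⟨q, hq, hassoc⟩ := exists_mem_normalizedFactors_of_dvd hx hp.irreducible h
    have heq : normalize p = normalize q := normalize_eq_normalize hassoc.dvd hassoc.symm.dvd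
    rw [hpn, normalize_normalized_factor q hq] at heq
    exact heq ▸ hq

theorem pow_exp_ne_zero {g r f : α} {k : ℕ} (heq : f = g ^ k * r) (hrel : IsRelPrime g r)
    (hgf : g ∣ f) (hgu : ¬IsUnit g) : k ≠ 0 := by
  rintro rfl
  rw [pow_zero, one_mul] at heq
  exact hgu (hrel dvd_rfl (heq ▸ hgf))

theorem prime_powAll {P : Set α} (h0 : (0 : α) ∉ P) {q : α} (hq : Prime q) : PowAll P q := by
  intro f hf
  obtain ⟨k, r, hndvd, heq⟩ :=
    WfDvdMonoid.max_power_factor (fun h => h0 (h ▸ hf)) hq.irreducible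
  refine ⟨k, r, ?_, heq⟩
  intro c hcq hcr
  obtain ⟨d, hd⟩ := hcq
  rcases hq.irreducible.isUnit_or_isUnit hd with hu | hu
  · exact hu
  · exfalso
    apply hndvd
    have hqc : q ∣ c := by rw [hd]; exact hu.mul_right_dvd.mpr dvd_rfl
    exact hqc.trans hcr

theorem exists_primDiv {P : Set α} (h0 : (0 : α) ∉ P) {f q : α} (hf : f ∈ P) (hq : Prime q)
    (hqf : q ∣ f) : ∃ g, PrimDiv P g ∧ q ∣ g ∧ g ∣ f := by
  have hf0 : f ≠ 0 := fun h => h0 (h ▸ hf)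
  set S : Set α := {g | g ∣ f ∧ q ∣ g ∧ PowAll P g} with hS
  have hqS : q ∈ S := ⟨hqf, dvd_rfl, prime_powAll h0 hq⟩
  have hcard : ∀ g ∈ S, Multiset.card (normalizedFactors g) ≤
      Multiset.card (normalizedFactors f) := by
    intro g hg
    have hg0 : g ≠ 0 := fun h => hf0 (zero_dvd_iff.mp (h ▸ hg.1))
    exact Multiset.card_le_card
      ((dvd_iff_normalizedFactors_le_normalizedFactors hg0 hf0).mp hg.1)
  set D : Set ℕ := (fun g => Multiset.card (normalizedFactors g)) '' S with hD
  have hDne : D.Nonempty := ⟨_, q, hqS, rfl⟩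
  have hDbdd : BddAbove D := ⟨Multiset.card (normalizedFactors f), by
    rintro x ⟨g, hg, rfl⟩; exact hcard g hg⟩
  obtain ⟨g, hgS, hgmax⟩ : ∃ g ∈ S, Multiset.card (normalizedFactors g) = sSup D :=
    Nat.sSup_mem hDne hDbdd
  have hg0 : g ≠ 0 := fun h => hf0 (zero_dvd_iff.mp (h ▸ hgS.1))
  refine ⟨g, ⟨hgS.2.2, ?_⟩, hgS.2.1, hgS.1⟩
  intro h hgh hnass hpow
  have hqh : q ∣ h := hgS.2.1.trans hgh
  obtain ⟨k, r, hrel, heq⟩ := hpow f hf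
  have hk : k ≠ 0 := by
    rintro rfl
    rw [pow_zero, one_mul] at heq
    exact hq.not_isUnit (hrel hqh (heq ▸ hqf))
  have hhf : h ∣ f := by rw [heq]; exact (dvd_pow_self h hk).mul_right r
  have hhS : h ∈ S := ⟨hhf, hqh, hpow⟩
  have hh0 : h ≠ 0 := fun e => hf0 (zero_dvd_iff.mp (e ▸ hhf))
  have hle : normalizedFactors g ≤ normalizedFactors h :=
    (dvd_iff_normalizedFactors_le_normalizedFactors hg0 hh0).mp hgh
  have hcardle : Multiset.card (normalizedFactors h) ≤ Multiset.card (normalizedFactors g) := by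
    rw [hgmax]; exact le_csSup hDbdd ⟨h, hhS, rfl⟩
  have heqF : normalizedFactors g = normalizedFactors h :=
    Multiset.eq_of_le_of_card_le hle hcardle
  exact hnass ((associated_iff_normalizedFactors_eq_normalizedFactors hg0 hh0).mpr heqF)

theorem primDiv_associated {P : Set α} (h0 : (0 : α) ∉ P) {f g h q : α} (hf : f ∈ P)
    (hg : PrimDiv P g) (hh : PrimDiv P h) (hq : Prime q) (hqg : q ∣ g) (hqh : q ∣ h)
    (hgf : g ∣ f) (hhf : h ∣ f) : Associated g h := by
  have hf0 : f ≠ 0 := fun e => h0 (e ▸ hf)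
  have hg0 : g ≠ 0 := fun e => hf0 (zero_dvd_iff.mp (e ▸ hgf))
  have hh0 : h ≠ 0 := fun e => hf0 (zero_dvd_iff.mp (e ▸ hhf))
  have hgu : ¬IsUnit g := fun hu => hq.not_isUnit (isUnit_of_dvd_unit hqg hu)
  have hhu : ¬IsUnit h := fun hu => hq.not_isUnit (isUnit_of_dvd_unit hqh hu)
  -- replace q by its normalization
  obtain ⟨q, hq, hqn, hqg, hqh⟩ : ∃ q', Prime q' ∧ normalize q' = q' ∧ q' ∣ g ∧ q' ∣ h :=
    ⟨normalize q, (associated_normalize q).prime hq, normalize_idem q,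
      (normalize_associated q).dvd.trans hqg, (normalize_associated q).dvd.trans hqh⟩
  obtain ⟨a, rg, hrelg, heqg⟩ := hg.1 f hf
  obtain ⟨b, rh, hrelh, heqh⟩ := hh.1 f hf
  have ha : a ≠ 0 := pow_exp_ne_zero heqg hrelg hgf hgu
  have hb : b ≠ 0 := pow_exp_ne_zero heqh hrelh hhf hhu
  set d := Nat.gcd a b with hd
  have hdpos : 0 < d := Nat.gcd_pos_of_pos_left _ (Nat.pos_of_ne_zero ha)
  set a₁ := a / d with ha₁def
  set b₁ := b / d with hb₁def
  have hda : d * a₁ = a := Nat.mul_div_cancel' (Nat.gcd_dvd_left a b)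
  have hdb : d * b₁ = b := Nat.mul_div_cancel' (Nat.gcd_dvd_right a b)
  have ha₁ : a₁ ≠ 0 := by intro e; apply ha; rw [← hda, e, mul_zero]
  have hb₁ : b₁ ≠ 0 := by intro e; apply hb; rw [← hdb, e, mul_zero]
  have hcop : Nat.Coprime a₁ b₁ := Nat.coprime_div_gcd_div_gcd hdpos
  have hkey : ∀ p : α, Prime p → p ∣ g → p ∣ h →
      a₁ * Multiset.count p (normalizedFactors g)
        = b₁ * Multiset.count p (normalizedFactors h) := by
    intro p hp hpg hph
    have h1 : a * Multiset.count p (normalizedFactors g)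
        = b * Multiset.count p (normalizedFactors h) := by
      rw [← count_powAll_rep hf0 hg0 heqg hrelg hp hpg,
        ← count_powAll_rep hf0 hh0 heqh hrelh hp hph]
    apply Nat.eq_of_mul_eq_mul_left hdpos
    calc d * (a₁ * Multiset.count p (normalizedFactors g))
        = (d * a₁) * Multiset.count p (normalizedFactors g) := (mul_assoc _ _ _).symm
      _ = a * Multiset.count p (normalizedFactors g) := by rw [hda]
      _ = b * Multiset.count p (normalizedFactors h) := h1
      _ = (d * b₁) * Multiset.count p (normalizedFactors h) := by rw [hdb]
      _ = d * (b₁ * Multiset.count p (normalizedFactors h)) := mul_assoc _ _ _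
  set M : Multiset α := a₁ • normalizedFactors g ∪ b₁ • normalizedFactors h with hM
  set m := M.prod with hm
  have hMmem : ∀ p ∈ M, p ∈ normalizedFactors g ∨ p ∈ normalizedFactors h := by
    intro p hp
    rcases Multiset.mem_union.mp hp with h' | h'
    · exact Or.inl (Multiset.mem_nsmul.mp h').2
    · exact Or.inr (Multiset.mem_nsmul.mp h').2
  have hMprime : ∀ p ∈ M, Prime p := fun p hp =>
    (hMmem p hp).elim (prime_of_normalized_factor p) (prime_of_normalized_factor p)
  have hMnorm : ∀ p ∈ M, normalize p = p := fun p hp =>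
    (hMmem p hp).elim (normalize_normalized_factor p) (normalize_normalized_factor p)
  have : Nontrivial α := nontrivial_of_ne g 0 hg0
  have hm0 : m ≠ 0 :=
    Multiset.prod_ne_zero (fun h => (hMprime 0 h).ne_zero rfl)
  have hFm : normalizedFactors m = M := by
    rw [hm, normalizedFactors_prod_eq M (fun p hp => (hMprime p hp).irreducible)]
    exact (Multiset.map_congr rfl hMnorm).trans (Multiset.map_id M)
  have hcountM : ∀ p : α, Multiset.count p M =
      max (a₁ * Multiset.count p (normalizedFactors g))
        (b₁ * Multiset.count p (normalizedFactors h)) := by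
    intro p
    rw [hM, Multiset.count_union, Multiset.count_nsmul, Multiset.count_nsmul]
  have hpow : PowAll P m := by
    intro f' hf'
    have hf'0 : f' ≠ 0 := fun e => h0 (e ▸ hf')
    obtain ⟨a', rg', hrelg', heqg'⟩ := hg.1 f' hf'
    obtain ⟨b', rh', hrelh', heqh'⟩ := hh.1 f' hf'
    have hctg' : ∀ p : α, Prime p → p ∣ g →
        Multiset.count p (normalizedFactors f') = a' * Multiset.count p (normalizedFactors g) :=
      fun p hp hpg => count_powAll_rep hf'0 hg0 heqg' hrelg' hp hpg
    have hcth' : ∀ p : α, Prime p → p ∣ h →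
        Multiset.count p (normalizedFactors f') = b' * Multiset.count p (normalizedFactors h) :=
      fun p hp hph => count_powAll_rep hf'0 hh0 heqh' hrelh' hp hph
    have hβ : 0 < Multiset.count q (normalizedFactors h) :=
      Multiset.count_pos.mpr ((mem_nf_iff hq hqn hh0).mpr hqh)
    have h1 : a₁ * Multiset.count q (normalizedFactors g)
        = b₁ * Multiset.count q (normalizedFactors h) := hkey q hq hqg hqh
    have h2 : a' * Multiset.count q (normalizedFactors g)
        = b' * Multiset.count q (normalizedFactors h) := by
      rw [← hctg' q hq hqg, ← hcth' q hq hqh]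
    have h3 : a₁ * b' = a' * b₁ := by
      apply Nat.eq_of_mul_eq_mul_right hβ
      calc a₁ * b' * Multiset.count q (normalizedFactors h)
          = a₁ * (b' * Multiset.count q (normalizedFactors h)) := mul_assoc _ _ _
        _ = a₁ * (a' * Multiset.count q (normalizedFactors g)) := by rw [h2]
        _ = a' * (a₁ * Multiset.count q (normalizedFactors g)) := by ring
        _ = a' * (b₁ * Multiset.count q (normalizedFactors h)) := by rw [h1]
        _ = a' * b₁ * Multiset.count q (normalizedFactors h) := (mul_assoc _ _ _).symm
    have h4 : a₁ ∣ a' := hcop.dvd_of_dvd_mul_right ⟨b', h3.symm⟩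
    obtain ⟨s, hs⟩ := h4
    have hb' : b' = b₁ * s := by
      apply Nat.eq_of_mul_eq_mul_left (Nat.pos_of_ne_zero ha₁)
      rw [h3, hs]; ring
    have hcnt : ∀ p ∈ M, Multiset.count p (normalizedFactors f') = s * Multiset.count p M := by
      intro p hp
      have hpp := hMprime p hp
      rcases hMmem p hp with hmem | hmem
      · have hpg : p ∣ g := dvd_of_mem_normalizedFactors hmem
        by_cases hph : p ∣ h
        · rw [hctg' p hpp hpg, hcountM p, ← hkey p hpp hpg hph, max_self, hs]; ring
        · have hnm : p ∉ normalizedFactors h := fun c => hph (dvd_of_mem_normalizedFactors c)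
          rw [hctg' p hpp hpg, hcountM p, Multiset.count_eq_zero_of_notMem hnm, mul_zero,
            Nat.max_eq_left (Nat.zero_le _), hs]
          ring
      · have hph : p ∣ h := dvd_of_mem_normalizedFactors hmem
        by_cases hpg : p ∣ g
        · rw [hctg' p hpp hpg, hcountM p, ← hkey p hpp hpg hph, max_self, hs]; ring
        · have hnm : p ∉ normalizedFactors g := fun c => hpg (dvd_of_mem_normalizedFactors c)
          rw [hcth' p hpp hph, hcountM p, Multiset.count_eq_zero_of_notMem hnm, mul_zero,
            Nat.max_eq_right (Nat.zero_le _), hb']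
          ring
    have hdvd : m ^ s ∣ f' := by
      rw [dvd_iff_normalizedFactors_le_normalizedFactors (pow_ne_zero _ hm0) hf'0,
        normalizedFactors_pow, hFm, Multiset.le_iff_count]
      intro p
      rw [Multiset.count_nsmul]
      by_cases hp : p ∈ M
      · rw [hcnt p hp]
      · rw [Multiset.count_eq_zero_of_notMem hp, mul_zero]
        exact Nat.zero_le _
    obtain ⟨r, hr⟩ := hdvd
    refine ⟨s, r, ?_, hr⟩
    intro c hcm hcr
    by_contra hcu
    have hr0 : r ≠ 0 := by rintro rfl; rw [mul_zero] at hr; exact hf'0 hr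
    have hc0 : c ≠ 0 := fun e => hr0 (zero_dvd_iff.mp (e ▸ hcr))
    obtain ⟨p, hpirr, hpc⟩ := WfDvdMonoid.exists_irreducible_factor hcu hc0
    have hpp : Prime p := UniqueFactorizationMonoid.irreducible_iff_prime.mp hpirr
    have hp'p : Prime (normalize p) := (associated_normalize p).prime hpp
    have hp'dvd : normalize p ∣ p := (normalize_associated p).dvd
    have hp'M : normalize p ∈ M := by
      rw [← hFm]
      exact (mem_nf_iff hp'p (normalize_idem p) hm0).mpr (hp'dvd.trans (hpc.trans hcm))
    have hcount2 : Multiset.count (normalize p) (normalizedFactors f')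
        = s * Multiset.count (normalize p) M
          + Multiset.count (normalize p) (normalizedFactors r) := by
      rw [hr, normalizedFactors_mul (pow_ne_zero _ hm0) hr0, normalizedFactors_pow, hFm,
        Multiset.count_add, Multiset.count_nsmul]
    have h5 : s * Multiset.count (normalize p) M
        = s * Multiset.count (normalize p) M
          + Multiset.count (normalize p) (normalizedFactors r) := by
      rw [← hcount2, hcnt _ hp'M]
    have h6 : Multiset.count (normalize p) (normalizedFactors r) = 0 :=
      (left_eq_add.mp h5)
    have hp'r : normalize p ∣ r := hp'dvd.trans (hpc.trans hcr)
    rw [Multiset.count_eq_zero] at h6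
    exact h6 ((mem_nf_iff hp'p (normalize_idem p) hr0).mpr hp'r)
  have hgm : g ∣ m := by
    rw [dvd_iff_normalizedFactors_le_normalizedFactors hg0 hm0, hFm, hM]
    refine le_trans ?_ Multiset.le_union_left
    rw [Multiset.le_iff_count]
    intro p
    rw [Multiset.count_nsmul]
    exact Nat.le_mul_of_pos_left _ (Nat.pos_of_ne_zero ha₁)
  have hhm : h ∣ m := by
    rw [dvd_iff_normalizedFactors_le_normalizedFactors hh0 hm0, hFm, hM]
    refine le_trans ?_ Multiset.le_union_right
    rw [Multiset.le_iff_count]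
    intro p
    rw [Multiset.count_nsmul]
    exact Nat.le_mul_of_pos_left _ (Nat.pos_of_ne_zero hb₁)
  have hassg : Associated g m := by
    by_contra hn
    exact hg.2 m hgm hn hpow
  have hassh : Associated h m := by
    by_contra hn
    exact hh.2 m hhm hn hpow
  exact hassg.trans hassh.symm

theorem exists_primDiv_factorization {P : Set α} (h0 : (0 : α) ∉ P) {f : α} (hf : f ∈ P) :
    ∃ m : Multiset α, (∀ p ∈ m, PrimDiv P p ∧ ¬IsUnit p) ∧ Associated m.prod f := by
  have hf0 : f ≠ 0 := fun e => h0 (e ▸ hf)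
  have H : ∀ d : α, ∀ M : Multiset α, d ≠ 0 → (∀ p ∈ M, PrimDiv P p ∧ ¬IsUnit p) →
      IsRelPrime d M.prod → Associated (d * M.prod) f →
      ∃ m : Multiset α, (∀ p ∈ m, PrimDiv P p ∧ ¬IsUnit p) ∧ Associated m.prod f := by
    intro d
    refine WellFounded.induction wellFounded_dvdNotUnit
      (C := fun d : α => ∀ M : Multiset α, d ≠ 0 → (∀ p ∈ M, PrimDiv P p ∧ ¬IsUnit p) →
        IsRelPrime d M.prod → Associated (d * M.prod) f →
        ∃ m : Multiset α, (∀ p ∈ m, PrimDiv P p ∧ ¬IsUnit p) ∧ Associated m.prod f) d ?_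
    clear d
    intro d ih M hd0 hM hrel hass
    by_cases hdu : IsUnit d
    · refine ⟨M, hM, ?_⟩
      obtain ⟨u, rfl⟩ := hdu
      obtain ⟨v, hv⟩ := hass
      exact ⟨u * v, by rw [Units.val_mul, ← hv, ← mul_assoc, mul_comm M.prod (↑u : α)]⟩
    · obtain ⟨p, hpirr, hpd⟩ := WfDvdMonoid.exists_irreducible_factor hdu hd0
      have hp : Prime p := UniqueFactorizationMonoid.irreducible_iff_prime.mp hpirr
      have hdf : d ∣ f := (dvd_mul_right d M.prod).trans hass.dvd
      have hpf : p ∣ f := hpd.trans hdf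
      obtain ⟨g, hgprim, hpg, hgf⟩ := exists_primDiv h0 hf hp hpf
      have hg0 : g ≠ 0 := fun e => hf0 (zero_dvd_iff.mp (e ▸ hgf))
      have hgu : ¬IsUnit g := fun hu => hp.not_isUnit (isUnit_of_dvd_unit hpg hu)
      obtain ⟨k, r, hrrel, hfeq⟩ := hgprim.1 f hf
      have hk : k ≠ 0 := pow_exp_ne_zero hfeq hrrel hgf hgu
      have hgM : IsRelPrime g M.prod := by
        intro c hcg hcM
        by_contra hcu
        have hc0 : c ≠ 0 := fun e => hg0 (zero_dvd_iff.mp (e ▸ hcg))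
        obtain ⟨p', hp'irr, hp'c⟩ := WfDvdMonoid.exists_irreducible_factor hcu hc0
        have hp' : Prime p' := UniqueFactorizationMonoid.irreducible_iff_prime.mp hp'irr
        obtain ⟨h', hh'M, hp'h'⟩ := hp'.exists_mem_multiset_dvd (hp'c.trans hcM)
        have hh'f : h' ∣ f :=
          ((Multiset.dvd_prod hh'M).trans (dvd_mul_left M.prod d)).trans hass.dvd
        have hassoc : Associated g h' :=
          primDiv_associated h0 hf hgprim (hM h' hh'M).1 hp' (hp'c.trans hcg) hp'h' hgf hh'f
        exact hp.not_isUnit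
          (hrel hpd ((hpg.trans hassoc.dvd).trans (Multiset.dvd_prod hh'M)))
      have hgkM : IsRelPrime (g ^ k) M.prod := hgM.pow_left
      have hgkd : g ^ k ∣ d := by
        apply hgkM.dvd_of_dvd_mul_right
        have h1 : g ^ k ∣ f := by rw [hfeq]; exact dvd_mul_right _ _
        exact h1.trans hass.symm.dvd
      obtain ⟨d', hd'⟩ := hgkd
      have hd'0 : d' ≠ 0 := by rintro rfl; rw [mul_zero] at hd'; exact hd0 hd'
      have hgkU : ¬IsUnit (g ^ k) := fun hu => hgu (isUnit_of_dvd_unit (dvd_pow_self g hk) hu)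
      have hdnu : DvdNotUnit d' d := ⟨hd'0, g ^ k, hgkU, by rw [hd', mul_comm]⟩
      have h1 : IsRelPrime d' M.prod := hrel.of_dvd_left (Dvd.intro_left _ hd'.symm)
      have h2 : IsRelPrime d' g := by
        intro c hcd' hcg
        obtain ⟨u, hu⟩ := hass
        rw [hfeq] at hu
        rw [hd'] at hu
        have hcancel : d' * M.prod * u = r := by
          apply mul_left_cancel₀ (pow_ne_zero k hg0)
          rw [← hu]
          simp [mul_assoc]
        have hcr : c ∣ r := by
          rw [← hcancel]
          exact (hcd'.mul_right M.prod).mul_right _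
        exact hrrel hcg hcr
      have h3 : IsRelPrime d' (M + Multiset.replicate k g).prod := by
        rw [Multiset.prod_add, Multiset.prod_replicate]
        exact h1.mul_right h2.pow_right
      have h4 : Associated (d' * (M + Multiset.replicate k g).prod) f := by
        have heq2 : d' * (M + Multiset.replicate k g).prod = d * M.prod := by
          rw [Multiset.prod_add, Multiset.prod_replicate, hd']
          simp [mul_comm, mul_assoc, mul_left_comm]
        rw [heq2]; exact hass
      have hM' : ∀ p' ∈ M + Multiset.replicate k g, PrimDiv P p' ∧ ¬IsUnit p' := by
        intro p' hp'
        rcases Multiset.mem_add.mp hp' with h' | h'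
        · exact hM p' h'
        · rw [Multiset.eq_of_mem_replicate h']
          exact ⟨hgprim, hgu⟩
      exact ih d' hdnu (M + Multiset.replicate k g) hd'0 hM' h3 h4
  have h1 : Associated (f * (0 : Multiset α).prod) f := by
    rw [Multiset.prod_zero, mul_one]
  have h2 : IsRelPrime f (0 : Multiset α).prod := by
    rw [Multiset.prod_zero]
    exact isRelPrime_one_right
  exact H f 0 hf0 (by simp) h2 h1

theorem primDiv_factorization_unique {P : Set α} (h0 : (0 : α) ∉ P) {f : α} (hf : f ∈ P) :
    ∀ m₁ m₂ : Multiset α, (∀ p ∈ m₁, PrimDiv P p ∧ ¬IsUnit p) →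
      (∀ p ∈ m₂, PrimDiv P p ∧ ¬IsUnit p) →
      m₁.prod ∣ f → m₂.prod ∣ f → Associated m₁.prod m₂.prod →
      Multiset.Rel Associated m₁ m₂ := by
  have hf0 : f ≠ 0 := fun e => h0 (e ▸ hf)
  intro m₁
  induction m₁ using Multiset.induction with
  | empty =>
    intro m₂ h₁ h₂ hd₁ hd₂ hass
    have hm₂ : m₂ = 0 := by
      by_contra hne
      obtain ⟨p, hp⟩ := Multiset.exists_mem_of_ne_zero hne
      have hu : IsUnit m₂.prod := by
        rw [Multiset.prod_zero] at hass
        exact associated_one_iff_isUnit.mp hass.symm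
      exact (h₂ p hp).2 (isUnit_of_dvd_unit (Multiset.dvd_prod hp) hu)
    rw [hm₂]
    exact Multiset.Rel.zero
  | cons g t ih =>
    intro m₂ h₁ h₂ hd₁ hd₂ hass
    have hgP := h₁ g (Multiset.mem_cons_self g t)
    have hgdvd : g ∣ (g ::ₘ t).prod := by
      rw [Multiset.prod_cons]; exact dvd_mul_right _ _
    have hgf : g ∣ f := hgdvd.trans hd₁
    have hg0 : g ≠ 0 := fun e => hf0 (zero_dvd_iff.mp (e ▸ hgf))
    obtain ⟨p, hpirr, hpg⟩ := WfDvdMonoid.exists_irreducible_factor hgP.2 hg0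
    have hpp : Prime p := UniqueFactorizationMonoid.irreducible_iff_prime.mp hpirr
    have hpm₂ : p ∣ m₂.prod := (hpg.trans hgdvd).trans hass.dvd
    obtain ⟨h, hhm₂, hph⟩ := hpp.exists_mem_multiset_dvd hpm₂
    have hhf : h ∣ f := (Multiset.dvd_prod hhm₂).trans hd₂
    have hgh : Associated g h :=
      primDiv_associated h0 hf hgP.1 (h₂ h hhm₂).1 hpp hpg hph hgf hhf
    have hass2 : Associated (g * t.prod) (h * (m₂.erase h).prod) := by
      have htmp := hass
      rw [Multiset.prod_cons] at htmp
      rw [← Multiset.cons_erase hhm₂, Multiset.prod_cons] at htmp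
      exact htmp
    have hrest : Associated t.prod (m₂.erase h).prod :=
      Associated.of_mul_left hass2 hgh hg0
    rw [← Multiset.cons_erase hhm₂]
    refine Multiset.Rel.cons hgh (ih (m₂.erase h) ?_ ?_ ?_ ?_ ?_)
    · exact fun p' hp' => h₁ p' (Multiset.mem_cons_of_mem hp')
    · exact fun p' hp' => h₂ p' (Multiset.mem_of_mem_erase hp')
    · refine dvd_trans ?_ hd₁
      rw [Multiset.prod_cons]
      exact dvd_mul_left _ _
    · exact (Multiset.prod_dvd_prod_of_le (Multiset.erase_le h m₂)).trans hd₂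
    · exact hrest

end Generic

/-- Every element of a class `P` of nonzero polynomials can be written as a product of
primitive divisors for `P`, uniquely up to reordering and multiplication by units. -/
theorem stmt14 {F : Type*} [Field F] {n : ℕ} (P : Set (MvPolynomial (Fin n) F))
    (h0 : (0 : MvPolynomial (Fin n) F) ∉ P)
    (f : MvPolynomial (Fin n) F) (hf : f ∈ P) :
    (∃ m : Multiset (MvPolynomial (Fin n) F),
        (∀ p ∈ m, IsPrimitiveDivisor P p ∧ ¬ IsUnit p) ∧ Associated m.prod f) ∧
    (∀ m₁ m₂ : Multiset (MvPolynomial (Fin n) F),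
        ((∀ p ∈ m₁, IsPrimitiveDivisor P p ∧ ¬ IsUnit p) ∧ Associated m₁.prod f) →
        ((∀ p ∈ m₂, IsPrimitiveDivisor P p ∧ ¬ IsUnit p) ∧ Associated m₂.prod f) →
        Multiset.Rel Associated m₁ m₂) := by
  have hconv : ∀ g : MvPolynomial (Fin n) F, IsPrimitiveDivisor P g ↔ PrimDiv P g :=
    fun g => Iff.rfl
  constructor
  · obtain ⟨m, hm, hass⟩ := exists_primDiv_factorization h0 hf
    exact ⟨m, fun p hp => ⟨(hconv p).mpr (hm p hp).1, (hm p hp).2⟩, hass⟩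
  · rintro m₁ m₂ ⟨h₁, ha₁⟩ ⟨h₂, ha₂⟩
    exact primDiv_factorization_unique h0 hf m₁ m₂
      (fun p hp => ⟨(hconv p).mp (h₁ p hp).1, (h₁ p hp).2⟩)
      (fun p hp => ⟨(hconv p).mp (h₂ p hp).1, (h₂ p hp).2⟩)
      ha₁.dvd ha₂.dvd (ha₁.trans ha₂.symm)
end

section
/- Let P be a set of polynomials, and let h_1, h_2 be two non-associate primitive divisors for P. Then there exist f_1, f_2 ∈ P such that the 2×2 integer matrix with entries v_{h_1}(f_1), v_{h_1}(f_2) (first row) and v_{h_2}(f_1), v_{h_2}(f_2) (second row) is invertible over the rationals, where v_h(f) denotes the multiplicity of the primitive divisor h in the factorization of f into primitive divisors. -/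
section Aux

variable {F : Type*} [Field F] {n : ℕ}

lemma relPrime_iff {a b : MvPolynomial (Fin n) F} : RelPrime a b ↔ IsRelPrime a b :=
  ⟨fun h _ ha hb => h _ ha hb, fun h c ha hb => h ha hb⟩

/-- In a GCD monoid with decomposition, `lcm (x^t) (y^t)` is associated to `(lcm x y)^t`. -/
lemma lcm_pow_assoc {α : Type*} [CommMonoidWithZero α] [IsCancelMulZero α] [GCDMonoid α]
    [DecompositionMonoid α] {x y : α} (hx : x ≠ 0) (hy : y ≠ 0) (t : ℕ) :
    Associated (lcm x y ^ t) (lcm (x ^ t) (y ^ t)) := by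
  have hgne : gcd x y ≠ 0 := fun h => hx ((gcd_eq_zero_iff x y).mp h).1
  obtain ⟨x', hx'⟩ := gcd_dvd_left x y
  obtain ⟨y', hy'⟩ := gcd_dvd_right x y
  have hu : IsUnit (gcd x' y') := by
    have h1 : Associated (gcd (gcd x y * x') (gcd x y * y')) (gcd x y * gcd x' y') :=
      gcd_mul_left' (gcd x y) x' y'
    rw [← hx', ← hy'] at h1
    obtain ⟨u, hu⟩ := h1.symm
    exact IsUnit.of_mul_eq_one _
      (mul_left_cancel₀ hgne (by rw [← mul_assoc, hu, mul_one]))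
  have hrp : IsRelPrime x' y' := fun d h1 h2 => isUnit_of_dvd_unit (dvd_gcd h1 h2) hu
  have hut : IsUnit (gcd (x' ^ t) (y' ^ t)) :=
    hrp.pow (gcd_dvd_left _ _) (gcd_dvd_right _ _)
  have hA : Associated (gcd (x ^ t) (y ^ t)) (gcd x y ^ t) := by
    have h1 : Associated (gcd (x ^ t) (y ^ t)) (gcd x y ^ t * gcd (x' ^ t) (y' ^ t)) := by
      have h2 := gcd_mul_left' (gcd x y ^ t) (x' ^ t) (y' ^ t)
      rwa [← mul_pow, ← mul_pow, ← hx', ← hy'] at h2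
    refine h1.trans ?_
    simpa using Associated.mul_left (gcd x y ^ t) (associated_one_iff_isUnit.mpr hut)
  have hB : Associated (gcd (x ^ t) (y ^ t) * lcm (x ^ t) (y ^ t)) (x ^ t * y ^ t) :=
    gcd_mul_lcm _ _
  have hD : Associated (gcd x y ^ t * lcm x y ^ t) (x ^ t * y ^ t) := by
    have h3 := (gcd_mul_lcm x y).pow_pow (n := t)
    rwa [mul_pow, mul_pow] at h3
  have hE : Associated (gcd x y ^ t * lcm (x ^ t) (y ^ t)) (gcd x y ^ t * lcm x y ^ t) :=
    ((hA.symm.mul_right _).trans hB).trans hD.symm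
  exact (hE.of_mul_left (Associated.refl _) (pow_ne_zero _ hgne)).symm

lemma not_associated_sq {g : MvPolynomial (Fin n) F} (hg0 : g ≠ 0) (hgu : ¬ IsUnit g) :
    ¬ Associated g (g ^ 2) := by
  rintro ⟨u, hu⟩
  rw [sq] at hu
  exact hgu (by rw [← mul_left_cancel₀ hg0 hu]; exact u.isUnit)

/-- Uniqueness of the exponent in a factorization `f = g ^ v * r` with `r` coprime to `g`. -/
lemma exp_unique {g : MvPolynomial (Fin n) F} (hg0 : g ≠ 0) (hgu : ¬ IsUnit g)
    {v w : ℕ} {r s : MvPolynomial (Fin n) F}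
    (hr : RelPrime g r) (hs : RelPrime g s) (e : g ^ v * r = g ^ w * s) : v = w := by
  wlog hvw : v ≤ w generalizing v w r s
  · exact (this hs hr e.symm (le_of_not_ge hvw)).symm
  rcases Nat.exists_eq_add_of_le hvw with ⟨c, rfl⟩
  rw [pow_add, mul_assoc] at e
  have hrc : r = g ^ c * s := mul_left_cancel₀ (pow_ne_zero v hg0) e
  rcases Nat.eq_zero_or_pos c with rfl | hc
  · simp
  · exact absurd (hr g dvd_rfl (hrc ▸ dvd_mul_of_dvd_left (dvd_pow_self g hc.ne') s)) hgu

open Classical in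
/-- The exponent of `g` in (a chosen coprime factorization of) `f`. -/
noncomputable def expOf (g f : MvPolynomial (Fin n) F) : ℕ :=
  if h : ∃ (k : ℕ) (r : MvPolynomial (Fin n) F), RelPrime g r ∧ f = g ^ k * r then
    h.choose else 0

lemma expOf_spec {g f : MvPolynomial (Fin n) F}
    (h : ∃ (k : ℕ) (r : MvPolynomial (Fin n) F), RelPrime g r ∧ f = g ^ k * r) :
    ∃ r, RelPrime g r ∧ f = g ^ expOf g f * r := by
  classical
  rw [expOf, dif_pos h]
  exact h.choose_spec

lemma expOf_eq {g f : MvPolynomial (Fin n) F} (hg0 : g ≠ 0) (hgu : ¬ IsUnit g)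
    {k : ℕ} {r : MvPolynomial (Fin n) F} (hr : RelPrime g r) (e : f = g ^ k * r) :
    expOf g f = k := by
  obtain ⟨s, hs, e2⟩ := expOf_spec ⟨k, r, hr, e⟩
  exact exp_unique hg0 hgu hs hr (e2.symm.trans e)

lemma prim_ne_zero {P : Set (MvPolynomial (Fin n) F)} {h₁ h₂ : MvPolynomial (Fin n) F}
    (hp1 : IsPrimitiveDivisor P h₁) (hp2 : IsPrimitiveDivisor P h₂)
    (hna : ¬ Associated h₁ h₂) (hu2 : ¬ IsUnit h₂) : h₁ ≠ 0 := by
  rintro rfl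
  have h2ne : h₂ ≠ 0 := fun e => hna (e ▸ Associated.refl (0 : MvPolynomial (Fin n) F))
  refine hp2.2 (h₂ ^ 2) (dvd_pow_self _ two_ne_zero) (not_associated_sq h2ne hu2) ?_
  intro f hf
  obtain ⟨k, r, hr, he⟩ := hp1.1 f hf
  rcases Nat.eq_zero_or_pos k with rfl | hk
  · rw [pow_zero, one_mul] at he
    exact ⟨0, r, fun c _ hcf => isUnit_of_dvd_unit hcf (hr r (dvd_zero r) dvd_rfl),
      by rw [pow_zero, one_mul]; exact he⟩
  · exfalso
    have hf0 : f = 0 := by rw [he, zero_pow hk.ne', zero_mul]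
    obtain ⟨k', r', hr', he'⟩ := hp2.1 f hf
    rw [hf0] at he'
    rcases mul_eq_zero.mp he'.symm with h | h
    · exact h2ne (pow_eq_zero_iff'.mp h).1
    · exact hu2 (hr' h₂ dvd_rfl (h ▸ dvd_zero h₂))

end Aux

/-- For two non-associate primitive divisors `h₁, h₂` for `P`, there exist `f₁, f₂ ∈ P`
such that the 2×2 matrix of multiplicities `v_{hᵢ}(fⱼ)` (exponents in the factorizations
`fⱼ = hᵢ ^ v * r` with `r` coprime to `hᵢ`) is invertible over `ℚ`. -/
theorem stmt15 {F : Type*} [Field F] {n : ℕ} (P : Set (MvPolynomial (Fin n) F))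
    (h₁ h₂ : MvPolynomial (Fin n) F)
    (hp1 : IsPrimitiveDivisor P h₁) (hp2 : IsPrimitiveDivisor P h₂)
    (hna : ¬ Associated h₁ h₂) :
    ∃ f₁ ∈ P, ∃ f₂ ∈ P,
      ∀ (v11 v12 v21 v22 : ℕ) (r11 r12 r21 r22 : MvPolynomial (Fin n) F),
        RelPrime h₁ r11 → f₁ = h₁ ^ v11 * r11 →
        RelPrime h₁ r12 → f₂ = h₁ ^ v12 * r12 →
        RelPrime h₂ r21 → f₁ = h₂ ^ v21 * r21 →
        RelPrime h₂ r22 → f₂ = h₂ ^ v22 * r22 →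
        Matrix.det !![(v11 : ℚ), (v12 : ℚ); (v21 : ℚ), (v22 : ℚ)] ≠ 0 := by
  classical
  have hu1 : ¬ IsUnit h₁ := fun hu => hp1.2 h₂ hu.dvd hna hp2.1
  have hu2 : ¬ IsUnit h₂ := fun hu => hp2.2 h₁ hu.dvd (fun a => hna a.symm) hp1.1
  have hz1 : h₁ ≠ 0 := prim_ne_zero hp1 hp2 hna hu2
  have hz2 : h₂ ≠ 0 := prim_ne_zero hp2 hp1 (fun a => hna a.symm) hu1
  have key : ∃ f₁ ∈ P, ∃ f₂ ∈ P,
      expOf h₁ f₁ * expOf h₂ f₂ ≠ expOf h₁ f₂ * expOf h₂ f₁ := by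
    letI : GCDMonoid (MvPolynomial (Fin n) F) :=
      UniqueFactorizationMonoid.toGCDMonoid _
    by_contra hcon
    push_neg at hcon
    set e₁ : MvPolynomial (Fin n) F → ℕ := expOf h₁ with he₁def
    set e₂ : MvPolynomial (Fin n) F → ℕ := expOf h₂ with he₂def
    have spec₁ : ∀ f ∈ P, ∃ r, RelPrime h₁ r ∧ f = h₁ ^ e₁ f * r :=
      fun f hf => expOf_spec (hp1.1 f hf)
    have spec₂ : ∀ f ∈ P, ∃ r, RelPrime h₂ r ∧ f = h₂ ^ e₂ f * r :=
      fun f hf => expOf_spec (hp2.1 f hf)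
    by_cases H1 : ∀ f ∈ P, e₁ f = 0
    · refine hp1.2 (h₁ ^ 2) (dvd_pow_self _ two_ne_zero) (not_associated_sq hz1 hu1) ?_
      intro f hf
      obtain ⟨r, hr, he⟩ := spec₁ f hf
      rw [H1 f hf, pow_zero, one_mul] at he
      exact ⟨0, r, relPrime_iff.mpr ((relPrime_iff.mp hr).pow_left),
        by rw [pow_zero, one_mul]; exact he⟩
    by_cases H2 : ∀ f ∈ P, e₂ f = 0
    · refine hp2.2 (h₂ ^ 2) (dvd_pow_self _ two_ne_zero) (not_associated_sq hz2 hu2) ?_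
      intro f hf
      obtain ⟨r, hr, he⟩ := spec₂ f hf
      rw [H2 f hf, pow_zero, one_mul] at he
      exact ⟨0, r, relPrime_iff.mpr ((relPrime_iff.mp hr).pow_left),
        by rw [pow_zero, one_mul]; exact he⟩
    push_neg at H1 H2
    obtain ⟨f', hf', hf'1⟩ := H1
    obtain ⟨g', hg', hg'2⟩ := H2
    have hf'2 : e₂ f' ≠ 0 := by
      intro h0
      have h2 := hcon f' hf' g' hg'
      rw [h0, mul_zero] at h2
      rcases Nat.mul_eq_zero.mp h2 with h | h
      · exact hf'1 h
      · exact hg'2 h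
    set A := e₁ f' with hAdef
    set B := e₂ f' with hBdef
    set d := Nat.gcd A B with hddef
    have hdpos : 0 < d := Nat.gcd_pos_of_pos_left _ (Nat.pos_of_ne_zero hf'1)
    set a' := A / d with ha'def
    set b' := B / d with hb'def
    have hA : A = d * a' := (Nat.mul_div_cancel' (Nat.gcd_dvd_left A B)).symm
    have hB : B = d * b' := (Nat.mul_div_cancel' (Nat.gcd_dvd_right A B)).symm
    have ha' : a' ≠ 0 := fun h => hf'1 (by rw [hA, h, mul_zero])
    have hb' : b' ≠ 0 := fun h => hf'2 (by rw [hB, h, mul_zero])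
    have cop : Nat.Coprime a' b' := Nat.coprime_div_gcd_div_gcd hdpos
    have hprop : ∀ f ∈ P, a' * e₂ f = b' * e₁ f := by
      intro f hf
      have h2 := hcon f' hf' f hf
      rw [← hAdef, ← hBdef, hA, hB] at h2
      apply Nat.eq_of_mul_eq_mul_left hdpos
      calc d * (a' * e₂ f) = d * a' * e₂ f := (mul_assoc _ _ _).symm
        _ = e₁ f * (d * b') := h2
        _ = d * (b' * e₁ f) := by ring
    have hsplit : ∀ f ∈ P, ∃ t, e₁ f = a' * t ∧ e₂ f = b' * t := by
      intro f hf
      have hdvd : a' ∣ e₁ f :=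
        cop.dvd_of_dvd_mul_left ⟨e₂ f, (hprop f hf).symm⟩
      obtain ⟨t, ht⟩ := hdvd
      refine ⟨t, ht, ?_⟩
      apply Nat.eq_of_mul_eq_mul_left (Nat.pos_of_ne_zero ha')
      rw [hprop f hf, ht]; ring
    set h : MvPolynomial (Fin n) F := lcm (h₁ ^ a') (h₂ ^ b') with hh
    have hpow : IsPowerDivisorOfAll P h := by
      intro f hf
      obtain ⟨t, ht1, ht2⟩ := hsplit f hf
      obtain ⟨r₁, hr₁, he1⟩ := spec₁ f hf
      obtain ⟨r₂, hr₂, he2⟩ := spec₂ f hf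
      have hd1f : h₁ ^ e₁ f ∣ f := ⟨r₁, he1⟩
      have hd2f : h₂ ^ e₂ f ∣ f := ⟨r₂, he2⟩
      have hlcm : Associated (h ^ t) (lcm (h₁ ^ e₁ f) (h₂ ^ e₂ f)) := by
        rw [ht1, ht2, pow_mul, pow_mul]
        exact lcm_pow_assoc (pow_ne_zero _ hz1) (pow_ne_zero _ hz2) t
      have hdvd : h ^ t ∣ f := hlcm.dvd.trans (lcm_dvd hd1f hd2f)
      obtain ⟨s, hs⟩ := hdvd
      have key1 : RelPrime h₁ s := by
        have hd : h₁ ^ e₁ f ∣ h ^ t := by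
          rw [ht1, pow_mul]
          exact pow_dvd_pow_of_dvd (dvd_lcm_left _ _) t
        obtain ⟨u, hu⟩ := hd
        have hfe : f = h₁ ^ e₁ f * (u * s) := by
          calc f = h ^ t * s := hs
            _ = h₁ ^ e₁ f * u * s := by rw [hu]
            _ = h₁ ^ e₁ f * (u * s) := mul_assoc _ _ _
        have hr1u : r₁ = u * s :=
          mul_left_cancel₀ (pow_ne_zero (e₁ f) hz1) (he1.symm.trans hfe)
        intro c hc hcs
        exact hr₁ c hc (hcs.trans ⟨u, by rw [hr1u, mul_comm]⟩)
      have key2 : RelPrime h₂ s := by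
        have hd : h₂ ^ e₂ f ∣ h ^ t := by
          rw [ht2, pow_mul]
          exact pow_dvd_pow_of_dvd (dvd_lcm_right _ _) t
        obtain ⟨u, hu⟩ := hd
        have hfe : f = h₂ ^ e₂ f * (u * s) := by
          calc f = h ^ t * s := hs
            _ = h₂ ^ e₂ f * u * s := by rw [hu]
            _ = h₂ ^ e₂ f * (u * s) := mul_assoc _ _ _
        have hr2u : r₂ = u * s :=
          mul_left_cancel₀ (pow_ne_zero (e₂ f) hz2) (he2.symm.trans hfe)
        intro c hc hcs
        exact hr₂ c hc (hcs.trans ⟨u, by rw [hr2u, mul_comm]⟩)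
      refine ⟨t, s, ?_, hs⟩
      intro c hch hcs
      have hcm : c ∣ h₁ ^ a' * h₂ ^ b' :=
        hch.trans (lcm_dvd (dvd_mul_right _ _) (dvd_mul_left _ _))
      obtain ⟨c₁, c₂, hc₁, hc₂, rfl⟩ := exists_dvd_and_dvd_of_dvd_mul hcm
      have hcu1 : IsUnit c₁ :=
        ((relPrime_iff.mp key1).pow_left (m := a')) hc₁ ((dvd_mul_right c₁ c₂).trans hcs)
      have hcu2 : IsUnit c₂ :=
        ((relPrime_iff.mp key2).pow_left (m := b')) hc₂ ((dvd_mul_left c₂ c₁).trans hcs)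
      exact hcu1.mul hcu2
    have has1 : Associated h₁ h := by
      by_contra hno
      exact hp1.2 h ((dvd_pow_self h₁ ha').trans (dvd_lcm_left _ _)) hno hpow
    have has2 : Associated h₂ h := by
      by_contra hno
      exact hp2.2 h ((dvd_pow_self h₂ hb').trans (dvd_lcm_right _ _)) hno hpow
    exact hna (has1.trans has2.symm)
  obtain ⟨f₁, hf₁, f₂, hf₂, hne⟩ := key
  refine ⟨f₁, hf₁, f₂, hf₂, ?_⟩
  intro v11 v12 v21 v22 r11 r12 r21 r22 hr11 he11 hr12 he12 hr21 he21 hr22 he22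
  rw [Matrix.det_fin_two_of]
  intro hdet
  have h11 : expOf h₁ f₁ = v11 := expOf_eq hz1 hu1 hr11 he11
  have h12 : expOf h₁ f₂ = v12 := expOf_eq hz1 hu1 hr12 he12
  have h21 : expOf h₂ f₁ = v21 := expOf_eq hz2 hu2 hr21 he21
  have h22 : expOf h₂ f₂ = v22 := expOf_eq hz2 hu2 hr22 he22
  apply hne
  rw [h11, h12, h21, h22]
  have hq : (v11 : ℚ) * v22 = v12 * v21 := sub_eq_zero.mp hdet
  exact_mod_cast hq
end

section
/- Let P be a class of polynomials, and let φ, ψ be non-associate irreducible polynomials, each dividing some element of P. Then the following are equivalent: (1) φ and ψ divide the same primitive divisor for P; (2) for every f, g ∈ P, the 2×2 matrix with rows (v_φ(f), v_φ(g)) and (v_ψ(f), v_ψ(g)) is singular, where v_φ(f) is the multiplicity of φ as an irreducible factor of f. -/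
open UniqueFactorizationMonoid

open UniqueFactorizationMonoid

section Aux
variable {α : Type*} [CommMonoidWithZero α] [UniqueFactorizationMonoid α]

lemma aux_multOf_iff {p f : α} (hp : ¬IsUnit p) (hf : f ≠ 0) {a : ℕ} :
    (p ^ a ∣ f ∧ ¬ p ^ (a + 1) ∣ f) ↔ multiplicity p f = a := by
  constructor
  · rintro ⟨h1, h2⟩; exact multiplicity_eq_of_dvd_of_not_dvd h1 h2
  · rintro rfl
    exact ⟨pow_multiplicity_dvd p f,
      (FiniteMultiplicity.of_not_isUnit hp hf).not_pow_dvd_of_multiplicity_lt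
        (Nat.lt_succ_self _)⟩

lemma aux_mult_le_of_dvd {p x y : α} (hp : ¬IsUnit p) (hy : y ≠ 0) (hxy : x ∣ y) :
    multiplicity p x ≤ multiplicity p y := by
  have hx : x ≠ 0 := fun h => hy (by simpa [h] using hxy)
  have hfx := FiniteMultiplicity.of_not_isUnit hp hx
  have hfy := FiniteMultiplicity.of_not_isUnit hp hy
  have := emultiplicity_le_emultiplicity_of_dvd_right (a := p) hxy
  rwa [hfx.emultiplicity_eq_multiplicity, hfy.emultiplicity_eq_multiplicity,
    Nat.cast_le] at this

lemma aux_dvd_of_forall_mult_le {x y : α} (hx : x ≠ 0) (hy : y ≠ 0)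
    (h : ∀ p : α, Prime p → multiplicity p x ≤ multiplicity p y) : x ∣ y := by
  classical
  letI : NormalizationMonoid α := UniqueFactorizationMonoid.normalizationMonoid.toNormalizationMonoid
  rw [dvd_iff_normalizedFactors_le_normalizedFactors hx hy]
  refine Multiset.le_iff_count.mpr fun q => ?_
  by_cases hq : q ∈ normalizedFactors x
  · have hqp := prime_of_normalized_factor q hq
    have hcount : ∀ z : α, z ≠ 0 → (normalizedFactors z).count q = multiplicity q z := by
      intro z hz
      exact count_normalizedFactors_eq hqp.irreducible (normalize_normalized_factor q hq)
        (pow_multiplicity_dvd _ _)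
        ((FiniteMultiplicity.of_not_isUnit hqp.not_unit hz).not_pow_dvd_of_multiplicity_lt
          (Nat.lt_succ_self _))
    rw [hcount x hx, hcount y hy]
    exact h q hqp
  · simp [Multiset.count_eq_zero_of_notMem hq]

lemma aux_mult_prod_pow {S : Finset α} (hS : ∀ q ∈ S, Prime q)
    (hdist : ∀ q ∈ S, ∀ q' ∈ S, q ≠ q' → ¬ q ∣ q') (E : α → ℕ) {p : α} (hp : p ∈ S) :
    multiplicity p (∏ q ∈ S, q ^ E q) = E p := by
  apply multiplicity_eq_of_emultiplicity_eq_some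
  rw [Finset.emultiplicity_prod (hS p hp),
    Finset.sum_eq_single_of_mem p hp (fun q hq hne => emultiplicity_eq_zero.mpr
      (fun hd => hdist p hp q hq hne.symm ((hS p hp).dvd_of_dvd_pow hd)))]
  exact emultiplicity_pow_self_of_prime (hS p hp) (E p)

lemma aux_mult_decomp {g f r : α} {k : ℕ}
    (hf : f ≠ 0) (hfr : f = g ^ k * r)
    (hrel : ∀ c : α, c ∣ g → c ∣ r → IsUnit c) {p : α} (hp : Prime p) (hpg : p ∣ g) :
    multiplicity p f = k * multiplicity p g := by
  have hpr : ¬ p ∣ r := fun hd => hp.not_unit (hrel p hpg hd)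
  have hr0 : multiplicity p r = 0 := multiplicity_eq_zero.mpr hpr
  have hfin : FiniteMultiplicity p f := FiniteMultiplicity.of_not_isUnit hp.not_unit hf
  subst hfr
  rcases Nat.eq_zero_or_pos k with rfl | hk
  · simpa using multiplicity_eq_zero.mpr hpr
  have hg : g ≠ 0 := by
    rintro rfl
    simp [zero_pow hk.ne'] at hf
  rw [multiplicity_mul hp hfin, hr0,
    (FiniteMultiplicity.of_not_isUnit hp.not_unit hg).multiplicity_pow hp]
  ring

end Aux

lemma aux_delta {R : Type*} (P : Set R) (v : R → ℕ) (f0 : R) (hf0 : f0 ∈ P)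
    (hpos : 0 < v f0) :
    ∃ δ : ℕ, 0 < δ ∧ (∀ f ∈ P, δ ∣ v f) ∧ (∀ m : ℕ, (∀ f ∈ P, m ∣ v f) → m ∣ δ) ∧
      ∀ w : R → ℕ, (∀ f ∈ P, ∀ g ∈ P, v f * w g = v g * w f) →
        ∃ e : ℕ, ∀ f ∈ P, δ * w f = e * v f := by
  classical
  set s : Set ℤ := (fun f => (v f : ℤ)) '' P with hs
  set I : Ideal ℤ := Ideal.span s with hI
  obtain ⟨d, hdI⟩ := (IsPrincipalIdealRing.principal I).principal
  have hmem : ∀ f ∈ P, (v f : ℤ) ∈ I := fun f hf => Ideal.subset_span ⟨f, hf, rfl⟩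
  have hd_dvd : ∀ f ∈ P, d ∣ (v f : ℤ) := by
    intro f hf
    have h := hmem f hf
    rw [hdI] at h
    exact Ideal.mem_span_singleton.mp h
  have hdne : d ≠ 0 := by
    rintro rfl
    have := hd_dvd f0 hf0
    simp only [zero_dvd_iff, Nat.cast_eq_zero] at this
    omega
  set δ : ℕ := d.natAbs with hδ
  have hδpos : 0 < δ := Int.natAbs_pos.mpr hdne
  have hdmem : d ∈ Ideal.span s := by
    rw [← hI, hdI]; exact Ideal.mem_span_singleton_self d
  have hcomb : ∃ (m : ℕ) (c : Fin m → ℤ) (x : Fin m → s),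
      ∑ i, c i • (x i : ℤ) = (δ : ℤ) := by
    obtain ⟨m, c, x, hsum⟩ := Submodule.mem_span_set'.mp hdmem
    rcases Int.natAbs_eq d with h | h
    · exact ⟨m, c, x, by rw [hsum, ← h]⟩
    · refine ⟨m, fun i => -c i, x, ?_⟩
      have : ∑ i, (-c i) • (x i : ℤ) = -∑ i, c i • (x i : ℤ) := by
        simp [neg_smul, Finset.sum_neg_distrib]
      rw [this, hsum]
      omega
  obtain ⟨m, c, x, hsum⟩ := hcomb
  have hx : ∀ i, ∃ f, f ∈ P ∧ ((v f : ℤ)) = (x i : ℤ) := fun i => (x i).2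
  choose Ff hFP hFv using hx
  have h1 : (δ : ℤ) = ∑ i, c i * (v (Ff i) : ℤ) := by
    rw [← hsum]
    exact Finset.sum_congr rfl fun i _ => by rw [← hFv i]; simp [zsmul_eq_mul]
  refine ⟨δ, hδpos, ?_, ?_, ?_⟩
  · intro f hf
    have := Int.natAbs_dvd_natAbs.mpr (hd_dvd f hf)
    simpa using this
  · intro q hq
    have : (q : ℤ) ∣ (δ : ℤ) := by
      rw [h1]
      refine Finset.dvd_sum fun i _ => Dvd.dvd.mul_left ?_ _
      exact Int.natCast_dvd_natCast.mpr (hq (Ff i) (hFP i))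
    exact_mod_cast this
  · intro w hw
    set eZ : ℤ := ∑ i, c i * (w (Ff i) : ℤ) with heZ
    have key : ∀ f ∈ P, (δ : ℤ) * (w f : ℤ) = eZ * (v f : ℤ) := by
      intro f hf
      rw [h1, heZ, Finset.sum_mul, Finset.sum_mul]
      refine Finset.sum_congr rfl fun i _ => ?_
      have hz : (v f : ℤ) * (w (Ff i) : ℤ) = (v (Ff i) : ℤ) * (w f : ℤ) := by
        exact_mod_cast congrArg (Nat.cast : ℕ → ℤ) (hw f hf (Ff i) (hFP i))
      calc c i * (v (Ff i) : ℤ) * (w f : ℤ) = c i * ((v (Ff i) : ℤ) * (w f : ℤ)) := by ring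
        _ = c i * ((v f : ℤ) * (w (Ff i) : ℤ)) := by rw [hz]
        _ = c i * (w (Ff i) : ℤ) * (v f : ℤ) := by ring
    have heZnn : 0 ≤ eZ := by
      have h2 := key f0 hf0
      nlinarith [Nat.cast_nonneg (α := ℤ) (w f0), Nat.cast_nonneg (α := ℤ) (δ),
        show (0:ℤ) < (v f0 : ℤ) by exact_mod_cast hpos]
    refine ⟨eZ.toNat, fun f hf => ?_⟩
    have h2 := key f hf
    rw [← Int.toNat_of_nonneg heZnn] at h2
    exact_mod_cast h2

/-- `a` is the multiplicity of `φ` in the irreducible factorization of `f`. -/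
def MultOf {F : Type*} [Field F] {n : ℕ} (φ f : MvPolynomial (Fin n) F) (a : ℕ) : Prop :=
  φ ^ a ∣ f ∧ ¬ φ ^ (a + 1) ∣ f

/-- Let `φ, ψ` be non-associate irreducible polynomials, each dividing some element of a
class `P` of nonzero polynomials.  Then `φ` and `ψ` divide the same primitive divisor for
`P` iff for every `f, g ∈ P` the 2×2 matrix of multiplicities of `φ` and `ψ` in `f` and
`g` is singular. -/
theorem stmt16 {F : Type*} [Field F] {n : ℕ} (P : Set (MvPolynomial (Fin n) F))
    (h0 : (0 : MvPolynomial (Fin n) F) ∉ P)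
    (φ ψ : MvPolynomial (Fin n) F)
    (hφ : Irreducible φ) (hψ : Irreducible ψ) (hna : ¬ Associated φ ψ)
    (hφdvd : ∃ f ∈ P, φ ∣ f) (hψdvd : ∃ f ∈ P, ψ ∣ f) :
    (∃ g : MvPolynomial (Fin n) F, IsPrimitiveDivisor P g ∧ φ ∣ g ∧ ψ ∣ g) ↔
      (∀ f ∈ P, ∀ g ∈ P, ∀ a b c d : ℕ,
        MultOf φ f a → MultOf φ g b → MultOf ψ f c → MultOf ψ g d →
        Matrix.det !![(a : ℚ), (b : ℚ); (c : ℚ), (d : ℚ)] = 0) := by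
  classical
  have hφp : Prime φ := UniqueFactorizationMonoid.irreducible_iff_prime.mp hφ
  have hψp : Prime ψ := UniqueFactorizationMonoid.irreducible_iff_prime.mp hψ
  have hne : ∀ f ∈ P, f ≠ 0 := fun f hf h => h0 (h ▸ hf)
  constructor
  · -- forward direction
    rintro ⟨g, ⟨hpd, _⟩, hφg, hψg⟩ f hfP g' hg'P a b c d ha hb hc hd
    have hfne := hne f hfP
    have hg'ne := hne g' hg'P
    obtain ⟨kf, rf, hrelf, heqf⟩ := hpd f hfP
    obtain ⟨kg, rg, hrelg, heqg⟩ := hpd g' hg'P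
    have ha' : a = kf * multiplicity φ g := by
      rw [← (aux_multOf_iff hφ.not_isUnit hfne).mp ha]
      exact aux_mult_decomp hfne heqf hrelf hφp hφg
    have hb' : b = kg * multiplicity φ g := by
      rw [← (aux_multOf_iff hφ.not_isUnit hg'ne).mp hb]
      exact aux_mult_decomp hg'ne heqg hrelg hφp hφg
    have hc' : c = kf * multiplicity ψ g := by
      rw [← (aux_multOf_iff hψ.not_isUnit hfne).mp hc]
      exact aux_mult_decomp hfne heqf hrelf hψp hψg
    have hd' : d = kg * multiplicity ψ g := by
      rw [← (aux_multOf_iff hψ.not_isUnit hg'ne).mp hd]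
      exact aux_mult_decomp hg'ne heqg hrelg hψp hψg
    have habcd : a * d = b * c := by rw [ha', hb', hc', hd']; ring
    rw [Matrix.det_fin_two_of, sub_eq_zero]
    exact_mod_cast habcd
  · -- backward direction
    intro H
    letI : NormalizationMonoid (MvPolynomial (Fin n) F) :=
      UniqueFactorizationMonoid.normalizationMonoid.toNormalizationMonoid
    obtain ⟨f0, hf0P, hφf0⟩ := hφdvd
    obtain ⟨f1, hf1P, hψf1⟩ := hψdvd
    have hf0ne := hne f0 hf0P
    have hMO : ∀ (p f : MvPolynomial (Fin n) F), ¬IsUnit p → f ∈ P →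
        MultOf p f (multiplicity p f) :=
      fun p f hp hf => (aux_multOf_iff hp (hne f hf)).mpr rfl
    have H' : ∀ f ∈ P, ∀ g ∈ P,
        multiplicity φ f * multiplicity ψ g = multiplicity φ g * multiplicity ψ f := by
      intro f hf g hg
      have := H f hf g hg _ _ _ _ (hMO φ f hφ.not_isUnit hf) (hMO φ g hφ.not_isUnit hg)
        (hMO ψ f hψ.not_isUnit hf) (hMO ψ g hψ.not_isUnit hg)
      rw [Matrix.det_fin_two_of, sub_eq_zero] at this
      exact_mod_cast this
    have hvφf0 : 0 < multiplicity φ f0 := dvd_iff_multiplicity_pos.mpr hφf0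
    obtain ⟨δ, hδpos, hδdvd, hδmax, hδe⟩ :=
      aux_delta P (fun f => multiplicity φ f) f0 hf0P hvφf0
    set Cq : MvPolynomial (Fin n) F → Prop := fun q => ∀ f ∈ P, ∀ g ∈ P,
      multiplicity φ f * multiplicity q g = multiplicity φ g * multiplicity q f with hCqdef
    have hCφ : Cq φ := fun f _ g _ => mul_comm _ _
    have hCψ : Cq ψ := H'
    have hCass : ∀ p q, Associated p q → Cq p → Cq q := by
      intro p q hpq hp f hf g hg
      rw [multiplicity_eq_of_associated_left hpq (c := g),
        multiplicity_eq_of_associated_left hpq (c := f)]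
      exact hp f hf g hg
    choose E0 hE0 using fun q (hq : Cq q) =>
      hδe (fun f => multiplicity q f) hq
    set E : MvPolynomial (Fin n) F → ℕ := fun q => if h : Cq q then E0 q h else 0 with hEdef
    have hE : ∀ q, Cq q → ∀ f ∈ P, δ * multiplicity q f = E q * multiplicity φ f := by
      intro q hq f hf
      simp only [hEdef, dif_pos hq]
      exact hE0 q hq f hf
    set S : Finset (MvPolynomial (Fin n) F) :=
      (normalizedFactors f0).toFinset.filter Cq with hSdef
    have hSmem : ∀ q ∈ S, q ∈ normalizedFactors f0 ∧ Cq q := by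
      intro q hq
      rw [hSdef, Finset.mem_filter, Multiset.mem_toFinset] at hq
      exact hq
    have hSprime : ∀ q ∈ S, Prime q := fun q hq => prime_of_normalized_factor q (hSmem q hq).1
    have hSdvd : ∀ q ∈ S, q ∣ f0 := fun q hq => dvd_of_mem_normalizedFactors (hSmem q hq).1
    have hSnorm : ∀ q ∈ S, normalize q = q :=
      fun q hq => normalize_normalized_factor q (hSmem q hq).1
    have hSdist : ∀ q ∈ S, ∀ q' ∈ S, q ≠ q' → ¬ q ∣ q' := by
      intro q hq q' hq' hne' hdvd
      have hass : Associated q q' :=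
        (hSprime q hq).irreducible.associated_of_dvd (hSprime q' hq').irreducible hdvd
      exact hne' (by rw [← hSnorm q hq, ← hSnorm q' hq',
        normalize_eq_normalize hass.dvd hass.symm.dvd])
    have hEpos : ∀ q ∈ S, 0 < E q := by
      intro q hq
      have h1 := hE q (hSmem q hq).2 f0 hf0P
      have h2 : 0 < multiplicity q f0 := dvd_iff_multiplicity_pos.mpr (hSdvd q hq)
      nlinarith
    set g : MvPolynomial (Fin n) F := ∏ q ∈ S, q ^ E q with hgdef
    have hgne : g ≠ 0 := by
      rw [hgdef]
      exact Finset.prod_ne_zero_iff.mpr fun q hq => pow_ne_zero _ (hSprime q hq).ne_zero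
    have hmultg : ∀ q ∈ S, multiplicity q g = E q :=
      fun q hq => aux_mult_prod_pow hSprime hSdist E hq
    have hmn : ∀ (p f : MvPolynomial (Fin n) F), multiplicity (normalize p) f = multiplicity p f :=
      fun p f => multiplicity_eq_of_associated_left (associated_normalize p)
    have hmemS_of : ∀ p : MvPolynomial (Fin n) F, Prime p → Cq p → p ∣ f0 → normalize p ∈ S := by
      intro p hp hCp hpf0
      obtain ⟨q, hqmem, hassoc⟩ := exists_mem_normalizedFactors_of_dvd hf0ne hp.irreducible hpf0
      have hnq : normalize p = q := by
        rw [normalize_eq_normalize hassoc.dvd hassoc.symm.dvd,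
          normalize_normalized_factor q hqmem]
      rw [hnq, hSdef, Finset.mem_filter, Multiset.mem_toFinset]
      exact ⟨hqmem, hCass p q hassoc hCp⟩
    have hφS : normalize φ ∈ S := hmemS_of φ hφp hCφ hφf0
    have hψf0 : ψ ∣ f0 := by
      have h1 := H' f0 hf0P f1 hf1P
      have h2 : 0 < multiplicity ψ f1 := dvd_iff_multiplicity_pos.mpr hψf1
      apply dvd_of_multiplicity_pos
      nlinarith
    have hψS : normalize ψ ∈ S := hmemS_of ψ hψp hCψ hψf0
    have hφg : φ ∣ g := (associated_normalize φ).dvd.trans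
      ((dvd_pow_self _ (hEpos _ hφS).ne').trans (Finset.dvd_prod_of_mem _ hφS))
    have hψg : ψ ∣ g := (associated_normalize ψ).dvd.trans
      ((dvd_pow_self _ (hEpos _ hψS).ne').trans (Finset.dvd_prod_of_mem _ hψS))
    have hEφ : E (normalize φ) = δ := by
      have h1 := hE (normalize φ) (hSmem _ hφS).2 f0 hf0P
      rw [hmn φ f0] at h1
      exact (Nat.eq_of_mul_eq_mul_right hvφf0 h1).symm
    have hvφg : multiplicity φ g = δ := by rw [← hmn φ g, hmultg _ hφS, hEφ]
    have hpda : IsPowerDivisorOfAll P g := by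
      intro f hfP
      have hfne := hne f hfP
      obtain ⟨k, hk⟩ := hδdvd f hfP
      have hqf : ∀ q ∈ S, multiplicity q f = E q * k := by
        intro q hq
        have h1 := hE q (hSmem q hq).2 f hfP
        rw [hk] at h1
        have h2 : δ * multiplicity q f = δ * (E q * k) := by rw [h1]; ring
        exact Nat.eq_of_mul_eq_mul_left hδpos h2
      have hgk : g ^ k ∣ f := by
        apply aux_dvd_of_forall_mult_le (pow_ne_zero _ hgne) hfne
        intro p hp
        have hfing : FiniteMultiplicity p g :=
          FiniteMultiplicity.of_not_isUnit hp.not_unit hgne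
        rw [hfing.multiplicity_pow hp]
        by_cases hpg : p ∣ g
        · obtain ⟨q, hqS, hpq⟩ : ∃ q ∈ S, p ∣ q := by
            obtain ⟨q, hqS, hpq⟩ := hp.exists_mem_finset_dvd (hgdef ▸ hpg)
            exact ⟨q, hqS, hp.dvd_of_dvd_pow hpq⟩
          have hass : Associated p q :=
            hp.irreducible.associated_of_dvd (hSprime q hqS).irreducible hpq
          rw [← multiplicity_eq_of_associated_left hass (c := g),
            ← multiplicity_eq_of_associated_left hass (c := f), hmultg q hqS, hqf q hqS,
            mul_comm]
        · rw [multiplicity_eq_zero.mpr hpg, mul_zero]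
          exact Nat.zero_le _
      obtain ⟨r, hr⟩ := hgk
      refine ⟨k, r, ?_, hr⟩
      intro cc hcg hcr
      by_contra hcu
      have hcne : cc ≠ 0 := fun h => hgne (zero_dvd_iff.mp (h ▸ hcg))
      obtain ⟨π, hπirr, hπc⟩ := WfDvdMonoid.exists_irreducible_factor hcu hcne
      have hπp : Prime π := UniqueFactorizationMonoid.irreducible_iff_prime.mp hπirr
      have hπg : π ∣ g := hπc.trans hcg
      obtain ⟨q, hqS, hπq⟩ : ∃ q ∈ S, π ∣ q := by
        obtain ⟨q, hqS, hπq⟩ := hπp.exists_mem_finset_dvd (hgdef ▸ hπg)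
        exact ⟨q, hqS, hπp.dvd_of_dvd_pow hπq⟩
      have hass : Associated π q :=
        hπp.irreducible.associated_of_dvd (hSprime q hqS).irreducible hπq
      have hrne : r ≠ 0 := fun h => hfne (by rw [hr, h, mul_zero])
      have hfinf : FiniteMultiplicity q (g ^ k * r) :=
        FiniteMultiplicity.of_not_isUnit (hSprime q hqS).not_unit (hr ▸ hfne)
      have h1 : multiplicity q f = k * E q + multiplicity q r := by
        rw [hr, multiplicity_mul (hSprime q hqS) hfinf,
          (FiniteMultiplicity.of_not_isUnit (hSprime q hqS).not_unit hgne).multiplicity_pow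
            (hSprime q hqS), hmultg q hqS]
      have h2 := hqf q hqS
      rw [mul_comm k (E q)] at h1
      have h3 : multiplicity q r = 0 := by omega
      have hqr : q ∣ r := hass.symm.dvd.trans (hπc.trans hcr)
      have := dvd_iff_multiplicity_pos.mpr hqr
      omega
    refine ⟨g, ⟨hpda, ?_⟩, hφg, hψg⟩
    intro h hgh hassoc hpdh
    obtain ⟨k0, r0, hrel0, heq0⟩ := hpdh f0 hf0P
    have hφh : φ ∣ h := hφg.trans hgh
    have hk0 : k0 ≠ 0 := by
      rintro rfl
      rw [pow_zero, one_mul] at heq0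
      exact hφ.not_isUnit (hrel0 φ hφh (heq0 ▸ hφf0))
    have hhne : h ≠ 0 := by
      rintro rfl
      rw [zero_pow hk0, zero_mul] at heq0
      exact hf0ne heq0
    have hdec : ∀ f ∈ P, ∃ kf : ℕ, ∀ p, Prime p → p ∣ h →
        multiplicity p f = kf * multiplicity p h := by
      intro f hf
      obtain ⟨kf, rf, hrelf, heqf⟩ := hpdh f hf
      exact ⟨kf, fun p hp hph => aux_mult_decomp (hne f hf) heqf hrelf hp hph⟩
    choose K hK using hdec
    have hCπ : ∀ p, Prime p → p ∣ h → Cq p := by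
      intro p hp hph f hf g' hg'
      rw [hK f hf φ hφp hφh, hK f hf p hp hph, hK g' hg' φ hφp hφh, hK g' hg' p hp hph]
      ring
    have hπf0 : ∀ p : MvPolynomial (Fin n) F, p ∣ h → p ∣ f0 := by
      intro p hph
      exact hph.trans ((dvd_pow_self h hk0).trans (Dvd.intro r0 heq0.symm))
    have hvφhδ : multiplicity φ h ∣ δ := by
      apply hδmax
      intro f hf
      exact ⟨K f hf, by rw [hK f hf φ hφp hφh, mul_comm]⟩
    have hvφh_ge : δ ≤ multiplicity φ h :=
      hvφg ▸ aux_mult_le_of_dvd hφ.not_isUnit hhne hgh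
    have hvφh : multiplicity φ h = δ :=
      Nat.le_antisymm (Nat.le_of_dvd hδpos hvφhδ) hvφh_ge
    have hhg : h ∣ g := by
      apply aux_dvd_of_forall_mult_le hhne hgne
      intro p hp
      by_cases hph : p ∣ h
      · have hq := hmemS_of p hp (hCπ p hp hph) (hπf0 p hph)
        have hmg : multiplicity p g = E (normalize p) := by rw [← hmn p g, hmultg _ hq]
        have h1 := hE (normalize p) (hSmem _ hq).2 f0 hf0P
        rw [hmn p f0] at h1
        have h2 := hK f0 hf0P φ hφp hφh
        rw [hvφh] at h2
        have h3 := hK f0 hf0P p hp hph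
        rw [h3, h2] at h1
        have hK0 : 0 < K f0 hf0P := by
          rcases Nat.eq_zero_or_pos (K f0 hf0P) with hz | hz
          · rw [hz, zero_mul] at h2; omega
          · exact hz
        have h4 : multiplicity p h = E (normalize p) := by nlinarith
        rw [hmg, h4]
      · rw [multiplicity_eq_zero.mpr hph]
        exact Nat.zero_le _
    exact hassoc (associated_of_dvd_dvd hgh hhg)
end

section
/- Let f = ∏_j h_j^{e_j} be a factorization of a polynomial, and suppose each h_j is mapped by a substitution to a polynomial H_j, with F = ∏_j H_j^{e_j} having irreducible factorization ∏_k t_k^{r_k}. Then ∑_k deg(t_k)(r_k − 1) ≥ ∑_j deg(H_j)(e_j − 1), with equality if and only if the polynomials H_j are squarefree and pairwise coprime. -/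
open Polynomial UniqueFactorizationMonoid Finset

/-- Every field is (trivially) a normalization monoid: every nonzero element
is normalized to `1`. -/
noncomputable instance (priority := 50) fieldNormalizationMonoid
    {F : Type*} [Field F] : NormalizationMonoid F :=
  letI : DecidableEq F := Classical.decEq F
  { normUnit := fun a => if h : a = 0 then 1 else (Units.mk0 a h)⁻¹
    normUnit_zero := dif_pos rfl
    normUnit_one := by
      rw [dif_neg one_ne_zero]
      ext
      simp
    normUnit_mul_units := by
      intro a u ha
      rw [dif_neg (mul_ne_zero ha u.ne_zero), dif_neg ha]
      ext
      simp [mul_comm] }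

private lemma nf_prod {F : Type*} [Field F] {β : Type*} (v : Finset β)
    (f : β → Polynomial F) (h : ∀ b ∈ v, f b ≠ 0) :
    normalizedFactors (∏ b ∈ v, f b) = ∑ b ∈ v, normalizedFactors (f b) := by
  classical
  induction v using Finset.induction_on with
  | empty => simp
  | @insert a v' hx ih =>
    rw [Finset.prod_insert hx, Finset.sum_insert hx,
      UniqueFactorizationMonoid.normalizedFactors_mul (h a (Finset.mem_insert_self a v'))
        (Finset.prod_ne_zero_iff.2 fun b hb => h b (Finset.mem_insert_of_mem hb)),
      ih fun b hb => h b (Finset.mem_insert_of_mem hb)]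

/-- Let `∏ⱼ Hⱼ^{eⱼ}` be a product of univariate polynomials with `eⱼ ≥ 1`, and let
`∏ₖ tₖ^{rₖ}` be its irreducible factorization (the `tₖ` pairwise non-associate
irreducibles with `rₖ ≥ 1`).  Then
`∑ₖ deg(tₖ)(rₖ − 1) ≥ ∑ⱼ deg(Hⱼ)(eⱼ − 1)`, with equality iff the `Hⱼ` are
squarefree and pairwise coprime. -/
theorem stmt18 {F : Type*} [Field F] {ι κ : Type*} (s : Finset ι) (u : Finset κ)
    (H : ι → Polynomial F) (e : ι → ℕ) (t : κ → Polynomial F) (r : κ → ℕ)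
    (he : ∀ j ∈ s, 1 ≤ e j) (hr : ∀ k ∈ u, 1 ≤ r k)
    (ht : ∀ k ∈ u, Irreducible (t k))
    (htt : ∀ k ∈ u, ∀ k' ∈ u, k ≠ k' → ¬ Associated (t k) (t k'))
    (hprod : Associated (∏ k ∈ u, t k ^ r k) (∏ j ∈ s, H j ^ e j)) :
    (∑ j ∈ s, (H j).natDegree * (e j - 1)) ≤ (∑ k ∈ u, (t k).natDegree * (r k - 1)) ∧
    ((∑ k ∈ u, (t k).natDegree * (r k - 1)) = (∑ j ∈ s, (H j).natDegree * (e j - 1)) ↔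
      (∀ j ∈ s, Squarefree (H j)) ∧
      (∀ j ∈ s, ∀ j' ∈ s, j ≠ j' → IsCoprime (H j) (H j'))) := by
  classical
  have hPne : (∏ k ∈ u, t k ^ r k) ≠ 0 :=
    Finset.prod_ne_zero_iff.2 fun k hk => pow_ne_zero _ (ht k hk).ne_zero
  have hQne : (∏ j ∈ s, H j ^ e j) ≠ 0 := by
    obtain ⟨w, hw⟩ := hprod
    rw [← hw]
    exact mul_ne_zero hPne w.ne_zero
  have hHne : ∀ j ∈ s, H j ≠ 0 := by
    intro j hj h0
    exact hQne (Finset.prod_eq_zero hj (by rw [h0, zero_pow (Nat.one_le_iff_ne_zero.1 (he j hj))]))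
  -- multiplicities
  set m : ι → κ → ℕ :=
    fun j k => Multiset.count (normalize (t k)) (normalizedFactors (H j)) with hm
  -- distinctness of the normalized t's
  have hntk : ∀ k ∈ u, ∀ k' ∈ u, k ≠ k' → normalize (t k) ≠ normalize (t k') := by
    intro k hk k' hk' hkk' hEq
    refine htt k hk k' hk' hkk' ?_
    have h1 : Associated (t k) (normalize (t k)) := (normalize_associated (t k)).symm
    have h2 : Associated (normalize (t k')) (t k') := normalize_associated (t k')
    rw [hEq] at h1
    exact h1.trans h2
  -- H j divides the t-product
  have hdvdP : ∀ j ∈ s, H j ∣ ∏ k ∈ u, t k ^ r k := by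
    intro j hj
    refine dvd_trans ?_ hprod.symm.dvd
    exact dvd_trans (dvd_pow_self (H j) (Nat.one_le_iff_ne_zero.1 (he j hj)))
      (Finset.dvd_prod_of_mem _ hj)
  -- every prime q dividing some H j is associated to some t k
  have hclass : ∀ q : Polynomial F, Prime q → ∀ j ∈ s, q ∣ H j →
      ∃ k ∈ u, Associated q (t k) := by
    intro q hq j hj hqH
    have hqP : q ∣ ∏ k ∈ u, t k ^ r k := hqH.trans (hdvdP j hj)
    obtain ⟨k, hk, hqk⟩ := hq.exists_mem_finset_dvd hqP
    have h1 : q ∣ t k := hq.dvd_of_dvd_pow hqk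
    exact ⟨k, hk, associated_of_dvd_dvd h1 (hq.irreducible.dvd_symm (ht k hk) h1)⟩
  -- elements of normalizedFactors (H j) are the normalize (t k)
  have hmemclass : ∀ j ∈ s, ∀ q ∈ normalizedFactors (H j), ∃ k ∈ u, q = normalize (t k) := by
    intro j hj q hq
    obtain ⟨k, hk, hass⟩ := hclass q (prime_of_normalized_factor q hq) j hj
      (dvd_of_mem_normalizedFactors hq)
    refine ⟨k, hk, ?_⟩
    rw [← normalize_normalized_factor q hq]
    exact normalize_eq_normalize hass.dvd hass.symm.dvd
  -- structure of normalizedFactors (H j)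
  have hNF : ∀ j ∈ s,
      normalizedFactors (H j) = ∑ k ∈ u, m j k • ({normalize (t k)} : Multiset _) := by
    intro j hj
    ext q
    rw [Multiset.count_sum']
    by_cases hqmem : ∃ k ∈ u, q = normalize (t k)
    · obtain ⟨k0, hk0, rfl⟩ := hqmem
      rw [Finset.sum_eq_single k0]
      · rw [Multiset.nsmul_singleton, Multiset.count_replicate, if_pos rfl]
      · intro k hk hkk
        simp only [Multiset.nsmul_singleton, Multiset.count_replicate]
        rw [if_neg (hntk k hk k0 hk0 hkk)]
      · intro h; exact absurd hk0 h
    · have h1 : Multiset.count q (normalizedFactors (H j)) = 0 := by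
        rw [Multiset.count_eq_zero]
        intro hmem
        exact hqmem (hmemclass j hj q hmem)
      rw [h1]
      symm
      refine Finset.sum_eq_zero fun k hk => ?_
      simp only [Multiset.nsmul_singleton, Multiset.count_replicate]
      rw [if_neg fun hEq => hqmem ⟨k, hk, hEq.symm⟩]
  -- degree of H j
  have hdeg : ∀ j ∈ s, (H j).natDegree = ∑ k ∈ u, m j k * (t k).natDegree := by
    intro j hj
    have h1 : Associated (normalizedFactors (H j)).prod (H j) :=
      prod_normalizedFactors (hHne j hj)
    have h2 : (H j).natDegree = (normalizedFactors (H j)).prod.natDegree :=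
      (natDegree_eq_of_degree_eq (degree_eq_degree_of_associated h1)).symm
    rw [h2, hNF j hj, Multiset.prod_sum]
    have h3 : ∀ k ∈ u, (m j k • ({normalize (t k)} : Multiset _)).prod
        = normalize (t k) ^ m j k := by
      intro k _
      rw [Multiset.nsmul_singleton, Multiset.prod_replicate]
    rw [Finset.prod_congr rfl h3, Polynomial.natDegree_prod]
    · refine Finset.sum_congr rfl fun k hk => ?_
      rw [Polynomial.natDegree_pow,
        natDegree_eq_of_degree_eq (degree_eq_degree_of_associated (normalize_associated (t k)))]
    · intro k hk
      exact pow_ne_zero _ (fun h0 => (ht k hk).ne_zero (normalize_eq_zero.1 h0))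
  -- multiplicity count: r k = ∑ j, e j * m j k
  have hrk : ∀ k ∈ u, r k = ∑ j ∈ s, e j * m j k := by
    intro k hk
    have hNFeq : normalizedFactors (∏ k ∈ u, t k ^ r k)
        = normalizedFactors (∏ j ∈ s, H j ^ e j) :=
      (associated_iff_normalizedFactors_eq_normalizedFactors hPne hQne).1 hprod
    have hL : normalizedFactors (∏ k ∈ u, t k ^ r k)
        = ∑ k' ∈ u, r k' • ({normalize (t k')} : Multiset _) := by
      rw [nf_prod u _ (fun k' hk' => pow_ne_zero _ (ht k' hk').ne_zero)]
      refine Finset.sum_congr rfl fun k' hk' => ?_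
      rw [UniqueFactorizationMonoid.normalizedFactors_pow,
        UniqueFactorizationMonoid.normalizedFactors_irreducible (ht k' hk')]
    have hR : normalizedFactors (∏ j ∈ s, H j ^ e j)
        = ∑ j ∈ s, e j • normalizedFactors (H j) := by
      rw [nf_prod s _ (fun j hj => pow_ne_zero _ (hHne j hj))]
      refine Finset.sum_congr rfl fun j hj => ?_
      rw [UniqueFactorizationMonoid.normalizedFactors_pow]
    have hcount := congrArg (Multiset.count (normalize (t k))) hNFeq
    rw [hL, hR, Multiset.count_sum', Multiset.count_sum'] at hcount
    have hcl : ∑ k' ∈ u, Multiset.count (normalize (t k))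
        (r k' • ({normalize (t k')} : Multiset _)) = r k := by
      rw [Finset.sum_eq_single k]
      · rw [Multiset.nsmul_singleton, Multiset.count_replicate, if_pos rfl]
      · intro k' hk' hkk
        simp only [Multiset.nsmul_singleton, Multiset.count_replicate]
        rw [if_neg (hntk k' hk' k hk hkk)]
      · intro h; exact absurd hk h
    have hcr : ∀ j ∈ s, Multiset.count (normalize (t k)) (e j • normalizedFactors (H j))
        = e j * m j k := by
      intro j _
      rw [Multiset.count_nsmul]
    rw [hcl, Finset.sum_congr rfl hcr] at hcount
    exact hcount
  -- total multiplicities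
  set M : κ → ℕ := fun k => ∑ j ∈ s, m j k with hM
  have hM1 : ∀ k ∈ u, 1 ≤ M k := by
    intro k hk
    rw [Nat.one_le_iff_ne_zero]
    intro h0
    have hz : ∀ j ∈ s, m j k = 0 := by
      intro j hj
      exact Nat.eq_zero_of_le_zero
        (h0 ▸ Finset.single_le_sum (f := fun i => m i k) (fun _ _ => Nat.zero_le _) hj)
    have : r k = 0 := by
      rw [hrk k hk]
      exact Finset.sum_eq_zero fun j hj => by rw [hz j hj, mul_zero]
    have := hr k hk
    omega
  have hdpos : ∀ k ∈ u, 0 < (t k).natDegree := fun k hk => (ht k hk).natDegree_pos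
  -- key identity : A = B + C
  set A : ℕ := ∑ k ∈ u, (t k).natDegree * (r k - 1) with hA
  set B : ℕ := ∑ j ∈ s, (H j).natDegree * (e j - 1) with hB
  set C : ℕ := ∑ k ∈ u, (t k).natDegree * (M k - 1) with hC
  have key : A = B + C := by
    have e1 : A + ∑ k ∈ u, (t k).natDegree = ∑ k ∈ u, (t k).natDegree * r k := by
      rw [hA, ← Finset.sum_add_distrib]
      refine Finset.sum_congr rfl fun k hk => ?_
      obtain ⟨c, hc⟩ := Nat.exists_eq_add_of_le (hr k hk)
      rw [hc, Nat.add_sub_cancel_left]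
      ring
    have e2 : B + ∑ j ∈ s, (H j).natDegree = ∑ j ∈ s, (H j).natDegree * e j := by
      rw [hB, ← Finset.sum_add_distrib]
      refine Finset.sum_congr rfl fun j hj => ?_
      obtain ⟨c, hc⟩ := Nat.exists_eq_add_of_le (he j hj)
      rw [hc, Nat.add_sub_cancel_left]
      ring
    have e3 : ∑ k ∈ u, (t k).natDegree * r k = ∑ j ∈ s, (H j).natDegree * e j := by
      have h1 : ∀ k ∈ u, (t k).natDegree * r k
          = ∑ j ∈ s, (e j * m j k) * (t k).natDegree := by
        intro k hk
        rw [hrk k hk, Finset.mul_sum]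
        exact Finset.sum_congr rfl fun j _ => by ring
      rw [Finset.sum_congr rfl h1, Finset.sum_comm]
      refine Finset.sum_congr rfl fun j hj => ?_
      rw [hdeg j hj, Finset.sum_mul]
      exact Finset.sum_congr rfl fun k _ => by ring
    have e4 : ∑ j ∈ s, (H j).natDegree = C + ∑ k ∈ u, (t k).natDegree := by
      rw [Finset.sum_congr rfl hdeg, Finset.sum_comm, hC, ← Finset.sum_add_distrib]
      refine Finset.sum_congr rfl fun k hk => ?_
      have h1 : ∑ j ∈ s, m j k * (t k).natDegree = M k * (t k).natDegree := by
        rw [hM, Finset.sum_mul]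
      rw [h1]
      obtain ⟨c, hc⟩ := Nat.exists_eq_add_of_le (hM1 k hk)
      rw [hc, Nat.add_sub_cancel_left]
      ring
    have e5 : A + ∑ k ∈ u, (t k).natDegree = B + C + ∑ k ∈ u, (t k).natDegree := by
      rw [e1, e3, ← e2]
      omega
    omega
  -- C = 0 iff all M k = 1
  have hC0 : C = 0 ↔ ∀ k ∈ u, M k = 1 := by
    rw [hC, Finset.sum_eq_zero_iff]
    constructor
    · intro h k hk
      have h1 := h k hk
      have hd := hdpos k hk
      have hMk := hM1 k hk
      rcases Nat.mul_eq_zero.1 h1 with h' | h' <;> omega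
    · intro h k hk
      rw [h k hk]
      simp
  refine ⟨by omega, ?_⟩
  rw [key]
  have heq : B + C = B ↔ C = 0 := by omega
  rw [heq, hC0]
  constructor
  · -- M k = 1 everywhere ⇒ squarefree and coprime
    intro hall
    constructor
    · intro j hj
      rw [UniqueFactorizationMonoid.squarefree_iff_nodup_normalizedFactors (hHne j hj),
        Multiset.nodup_iff_count_le_one]
      intro q
      by_cases hqmem : q ∈ normalizedFactors (H j)
      · obtain ⟨k, hk, rfl⟩ := hmemclass j hj q hqmem
        calc Multiset.count (normalize (t k)) (normalizedFactors (H j)) = m j k := rfl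
          _ ≤ M k := Finset.single_le_sum (f := fun i => m i k) (fun _ _ => Nat.zero_le _) hj
          _ = 1 := hall k hk
      · rw [Multiset.count_eq_zero.2 hqmem]
        omega
    · intro j hj j' hj' hjj'
      by_contra hnc
      have hgcdu : ¬ IsUnit (EuclideanDomain.gcd (H j) (H j')) := by
        intro hu
        exact hnc (EuclideanDomain.gcd_isUnit_iff.1 hu)
      have hgcd0 : EuclideanDomain.gcd (H j) (H j') ≠ 0 := by
        intro h0
        exact hHne j hj (EuclideanDomain.gcd_eq_zero_iff.1 h0).1
      obtain ⟨q, hqirr, hqdvd⟩ := WfDvdMonoid.exists_irreducible_factor hgcdu hgcd0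
      have hqj : q ∣ H j := hqdvd.trans (EuclideanDomain.gcd_dvd_left _ _)
      have hqj' : q ∣ H j' := hqdvd.trans (EuclideanDomain.gcd_dvd_right _ _)
      obtain ⟨k, hk, hass⟩ := hclass q hqirr.prime j hj hqj
      have hmem : ∀ i ∈ s, q ∣ H i → 1 ≤ m i k := by
        intro i hi hdvd
        obtain ⟨q', hq'mem, hq'ass⟩ := exists_mem_normalizedFactors_of_dvd (hHne i hi)
          (ht k hk) (hass.symm.dvd.trans hdvd)
        have hq'eq : q' = normalize (t k) := by
          rw [← normalize_normalized_factor q' hq'mem]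
          exact normalize_eq_normalize hq'ass.symm.dvd hq'ass.dvd
        have : normalize (t k) ∈ normalizedFactors (H i) := hq'eq ▸ hq'mem
        exact Multiset.count_pos.2 this
      have h1 := hmem j hj hqj
      have h2 := hmem j' hj' hqj'
      have hsum : m j k + m j' k ≤ M k := by
        rw [hM]
        have hsub : ({j, j'} : Finset ι) ⊆ s := by
          intro x hx
          rcases Finset.mem_insert.1 hx with rfl | hx
          · exact hj
          · rw [Finset.mem_singleton.1 hx]; exact hj'
        calc m j k + m j' k = ∑ i ∈ {j, j'}, m i k :=
            (Finset.sum_pair (f := fun i => m i k) hjj').symm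
          _ ≤ ∑ i ∈ s, m i k := Finset.sum_le_sum_of_subset hsub
      have := hall k hk
      omega
  · -- squarefree and coprime ⇒ M k = 1
    rintro ⟨hsf, hcop⟩ k hk
    have hle : M k ≤ 1 := by
      set Afin : Finset ι := s.filter (fun j => m j k ≠ 0) with hAfin
      have hcard : Afin.card ≤ 1 := by
        rw [Finset.card_le_one]
        intro a ha b hb
        rw [hAfin, Finset.mem_filter] at ha hb
        by_contra hab
        have hdvda : t k ∣ H a := by
          have hmem : normalize (t k) ∈ normalizedFactors (H a) :=
            Multiset.count_pos.1 (Nat.pos_of_ne_zero ha.2)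
          exact ((normalize_associated (t k)).symm.dvd).trans
            (dvd_of_mem_normalizedFactors hmem)
        have hdvdb : t k ∣ H b := by
          have hmem : normalize (t k) ∈ normalizedFactors (H b) :=
            Multiset.count_pos.1 (Nat.pos_of_ne_zero hb.2)
          exact ((normalize_associated (t k)).symm.dvd).trans
            (dvd_of_mem_normalizedFactors hmem)
        exact (ht k hk).not_isUnit ((hcop a ha.1 b hb.1 hab).isUnit_of_dvd' hdvda hdvdb)
      have hval : ∀ j ∈ Afin, m j k ≤ 1 := by
        intro j hj
        rw [hAfin, Finset.mem_filter] at hj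
        have hnd := (UniqueFactorizationMonoid.squarefree_iff_nodup_normalizedFactors
          (hHne j hj.1)).1 (hsf j hj.1)
        exact Multiset.nodup_iff_count_le_one.1 hnd _
      have hsumA : M k = ∑ j ∈ Afin, m j k := by
        rw [hM, hAfin]
        exact (Finset.sum_filter_ne_zero s).symm
      calc M k = ∑ j ∈ Afin, m j k := hsumA
        _ ≤ ∑ j ∈ Afin, 1 := Finset.sum_le_sum hval
        _ = Afin.card := by rw [Finset.sum_const, smul_eq_mul, mul_one]
        _ ≤ 1 := hcard
    have := hM1 k hk
    omega
end
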